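/- arXiv:1003.2285 — 6 statements merged into one kernel-verified Lean document; each statement's English description precedes it below -/
import Mathlib

section
/- Let M be a smooth Minkowski space whose compatible semi-inner-product B satisfies the Lipschitz property. Then the following are equivalent: (1) B is non-decomposable; (2) every diagonalizable linear operator on M that is adjoint abelian with respect to B is a scalar multiple of an isometry of M. -/
set_option linter.unusedSectionVars false

open Filter Topology

section Aux
variable {M : Type*} [NormedAddCommGroup M] [NormedSpace ℝ M] [FiniteDimensional ℝ M]

/-- The semi-inner product as a continuous linear map in its first variable. -/
noncomputable def aaBlin (B : M → M → ℝ)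
    (hadd : ∀ x y z : M, B (x + y) z = B x z + B y z)
    (hsmul : ∀ (c : ℝ) (x y : M), B (c • x) y = c * B x y) (y : M) : M →L[ℝ] ℝ :=
  LinearMap.toContinuousLinearMap
    { toFun := fun x => B x y
      map_add' := fun a b => hadd a b y
      map_smul' := fun c a => hsmul c a y }

lemma aaBlin_apply (B : M → M → ℝ)
    (hadd : ∀ x y z : M, B (x + y) z = B x z + B y z)
    (hsmul : ∀ (c : ℝ) (x y : M), B (c • x) y = c * B x y) (y x : M) :
    aaBlin B hadd hsmul y x = B x y := rfl

lemma aaSW (B : M → M → ℝ)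
    (hschwartz : ∀ x y : M, (B x y) ^ 2 ≤ B x x * B y y)
    (hcompat : ∀ x : M, ‖x‖ ^ 2 = B x x) (x y : M) :
    |B x y| ≤ ‖x‖ * ‖y‖ := by
  have h := hschwartz x y
  rw [← hcompat, ← hcompat] at h
  nlinarith [abs_nonneg (B x y), sq_abs (B x y), norm_nonneg x, norm_nonneg y,
    mul_nonneg (norm_nonneg x) (norm_nonneg y)]

lemma aaBzero_right (B : M → M → ℝ)
    (hschwartz : ∀ x y : M, (B x y) ^ 2 ≤ B x x * B y y)
    (hcompat : ∀ x : M, ‖x‖ ^ 2 = B x x) (x : M) : B x 0 = 0 := by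
  have := aaSW B hschwartz hcompat x 0
  simpa using this

lemma aaBzero_left (B : M → M → ℝ)
    (hsmul : ∀ (c : ℝ) (x y : M), B (c • x) y = c * B x y) (y : M) : B 0 y = 0 := by
  have := hsmul 0 0 y
  simpa using this

/-- Key: derivative of the squared norm. -/
lemma aaHasFDeriv (B : M → M → ℝ)
    (hadd : ∀ x y z : M, B (x + y) z = B x z + B y z)
    (hsmul : ∀ (c : ℝ) (x y : M), B (c • x) y = c * B x y)
    (hschwartz : ∀ x y : M, (B x y) ^ 2 ≤ B x x * B y y)
    (hcompat : ∀ x : M, ‖x‖ ^ 2 = B x x)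
    (hsmooth : ∀ x : M, x ≠ 0 → DifferentiableAt ℝ (fun y : M => ‖y‖) x)
    (y : M) :
    HasFDerivAt (fun z : M => ‖z‖ ^ 2) ((2 : ℝ) • aaBlin B hadd hsmul y) y := by
  by_cases hy : y = 0
  · subst hy
    have h0 : (2 : ℝ) • aaBlin B hadd hsmul (0 : M) = 0 := by
      ext x
      simp [aaBlin_apply, aaBzero_right B hschwartz hcompat x]
    rw [h0]
    rw [hasFDerivAt_iff_isLittleO_nhds_zero]
    simp only [norm_zero, zero_add, ContinuousLinearMap.zero_apply, sub_zero]
    rw [Asymptotics.isLittleO_iff]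
    intro c hc
    filter_upwards [Metric.ball_mem_nhds (0 : M) hc] with h hh
    rw [mem_ball_zero_iff] at hh
    have : ‖h‖ ^ 2 ≤ c * ‖h‖ := by nlinarith [norm_nonneg h]
    calc ‖‖h‖ ^ 2 - 0 ^ 2‖ = ‖h‖ ^ 2 := by simp [abs_of_nonneg (sq_nonneg ‖h‖)]
    _ ≤ c * ‖h‖ := this
  · have hN : HasFDerivAt (fun z : M => ‖z‖) (fderiv ℝ (fun z : M => ‖z‖) y) y :=
      (hsmooth y hy).hasFDerivAt
    set L := fderiv ℝ (fun z : M => ‖z‖) y with hL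
    have key : ∀ x : M, B x y = ‖y‖ * L x := by
      intro x
      have hpath : HasDerivAt (fun t : ℝ => y + t • x) x 0 := by
        simpa using ((hasDerivAt_id (0 : ℝ)).smul_const x).const_add y
      have hn : HasDerivAt (fun t : ℝ => ‖y + t • x‖) (L x) 0 := by
        have h1 : HasFDerivAt (fun z : M => ‖z‖) L ((fun t : ℝ => y + t • x) 0) := by
          simpa using hN
        exact h1.comp_hasDerivAt 0 hpath
      set q : ℝ → ℝ := fun t => ‖y‖ * ‖y + t • x‖ - ‖y‖ ^ 2 - t * B x y with hqdef
      have hq0 : q 0 = 0 := by simp [hqdef, pow_two]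
      have hqnonneg : ∀ t, 0 ≤ q t := by
        intro t
        have h1 : |B (y + t • x) y| ≤ ‖y + t • x‖ * ‖y‖ := aaSW B hschwartz hcompat _ _
        have h2 : B (y + t • x) y = B y y + t * B x y := by rw [hadd, hsmul]
        have h3 : ‖y‖ ^ 2 = B y y := hcompat y
        have h4 : B (y + t • x) y ≤ ‖y + t • x‖ * ‖y‖ := le_trans (le_abs_self _) h1
        simp only [hqdef]
        nlinarith [h4]
      have hq' : HasDerivAt q (‖y‖ * L x - B x y) 0 := by
        have ht : HasDerivAt (fun t : ℝ => t * B x y) (B x y) 0 := by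
          simpa using (hasDerivAt_id (0 : ℝ)).mul_const (B x y)
        exact ((hn.const_mul ‖y‖).sub_const (‖y‖ ^ 2)).sub ht
      have hmin : IsLocalMin q 0 :=
        Filter.Eventually.of_forall fun t => hq0.le.trans (hqnonneg t)
      have := hmin.hasDerivAt_eq_zero hq'
      linarith [this]
    have hmul := hN.mul hN
    have heq : (2 : ℝ) • aaBlin B hadd hsmul y = ‖y‖ • L + ‖y‖ • L := by
      ext x
      simp [aaBlin_apply, key x]
      ring
    rw [heq]
    have : (fun z : M => ‖z‖ ^ 2) = fun z : M => ‖z‖ * ‖z‖ := by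
      funext z; rw [pow_two]
    rw [this]
    exact hmul

end Aux

section Aux2
variable {M : Type*} [NormedAddCommGroup M] [NormedSpace ℝ M] [FiniteDimensional ℝ M]
variable (B : M → M → ℝ)
variable (hadd : ∀ x y z : M, B (x + y) z = B x z + B y z)
variable (hsmul : ∀ (c : ℝ) (x y : M), B (c • x) y = c * B x y)
variable (hschwartz : ∀ x y : M, (B x y) ^ 2 ≤ B x x * B y y)
variable (hcompat : ∀ x : M, ‖x‖ ^ 2 = B x x)
variable (hsmooth : ∀ x : M, x ≠ 0 → DifferentiableAt ℝ (fun y : M => ‖y‖) x)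

include hadd hsmul hschwartz hcompat hsmooth in
/-- Homogeneity in the second slot. -/
lemma aaHomog (c : ℝ) (x y : M) : B x (c • y) = c * B x y := by
  by_cases hc : c = 0
  · subst hc; simpa using aaBzero_right B hschwartz hcompat x
  · have hsm : HasFDerivAt (fun z : M => c • z) (c • ContinuousLinearMap.id ℝ M) y :=
      (c • ContinuousLinearMap.id ℝ M).hasFDerivAt
    have h1 : HasFDerivAt (fun z : M => ‖c • z‖ ^ 2)
        (((2 : ℝ) • aaBlin B hadd hsmul (c • y)).comp (c • ContinuousLinearMap.id ℝ M)) y :=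
      (aaHasFDeriv B hadd hsmul hschwartz hcompat hsmooth (c • y)).comp y hsm
    have h2 : HasFDerivAt (fun z : M => ‖c • z‖ ^ 2)
        (c ^ 2 • ((2 : ℝ) • aaBlin B hadd hsmul y)) y := by
      have heq : (fun z : M => ‖c • z‖ ^ 2) = fun z : M => c ^ 2 * ‖z‖ ^ 2 := by
        funext z
        rw [norm_smul]
        simp [mul_pow, sq_abs]
      rw [heq]
      simpa [smul_smul, mul_comm] using
        (aaHasFDeriv B hadd hsmul hschwartz hcompat hsmooth y).const_mul (c ^ 2)
    have huniq := h1.unique h2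
    have hxx := congrFun (congrArg (fun (f : M →L[ℝ] ℝ) => (f : M → ℝ)) huniq) x
    have hL : (((2 : ℝ) • aaBlin B hadd hsmul (c • y)).comp
        (c • ContinuousLinearMap.id ℝ M)) x = 2 * (c * B x (c • y)) := by
      simp [ContinuousLinearMap.comp_apply, aaBlin_apply, hsmul]
      ring
    have hR : (c ^ 2 • ((2 : ℝ) • aaBlin B hadd hsmul y)) x = c ^ 2 * (2 * B x y) := by
      simp [aaBlin_apply]
    rw [hL, hR] at hxx
    have hfin : c * B x (c • y) = c * (c * B x y) := by linear_combination hxx / 2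
    exact mul_left_cancel₀ hc hfin

include hadd hsmul hschwartz hcompat hsmooth in
lemma aaCont (hlip : ∀ x : M, ‖x‖ = 1 → ∃ κ : ℝ, ∀ y z : M, ‖y‖ = 1 → ‖z‖ = 1 →
      |B x y - B x z| ≤ κ * ‖y - z‖) (x : M) : Continuous (fun y => B x y) := by
  by_cases hx : x = 0
  · subst hx
    simp only [aaBzero_left B hsmul]
    exact continuous_const
  rw [continuous_iff_continuousAt]
  intro y₀
  by_cases hy0 : y₀ = 0
  · subst hy0
    rw [ContinuousAt, aaBzero_right B hschwartz hcompat x]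
    apply squeeze_zero_norm (fun y => aaSW B hschwartz hcompat x y)
    have : Filter.Tendsto (fun y : M => ‖x‖ * ‖y‖) (𝓝 0) (𝓝 (‖x‖ * ‖(0 : M)‖)) :=
      (continuous_const.mul continuous_norm).tendsto 0
    simpa using this
  · set xh : M := ‖x‖⁻¹ • x with hxhdef
    have hxnz : ‖x‖ ≠ 0 := norm_ne_zero_iff.2 hx
    have hxn : ‖xh‖ = 1 := by
      rw [hxhdef, norm_smul]
      simp [abs_of_nonneg (inv_nonneg.2 (norm_nonneg x)), inv_mul_cancel₀ hxnz]
    obtain ⟨κ, hκ⟩ := hlip xh hxn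
    have hunit : ∀ y : M, y ≠ 0 → ‖(‖y‖⁻¹ • y)‖ = 1 := by
      intro y hy
      rw [norm_smul]
      simp [abs_of_nonneg (inv_nonneg.2 (norm_nonneg y)),
        inv_mul_cancel₀ (norm_ne_zero_iff.2 hy)]
    have hrep : ∀ y : M, y ≠ 0 → B x y = ‖x‖ * ‖y‖ * B xh (‖y‖⁻¹ • y) := by
      intro y hy
      have h1 : B x y = ‖x‖ * B xh y := by
        conv_lhs => rw [show x = ‖x‖ • xh by rw [hxhdef, smul_smul, mul_inv_cancel₀ hxnz, one_smul]]
        rw [hsmul]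
      have h2 : B xh (‖y‖⁻¹ • y) = ‖y‖⁻¹ * B xh y :=
        aaHomog B hadd hsmul hschwartz hcompat hsmooth _ _ _
      have hynz : ‖y‖ ≠ 0 := norm_ne_zero_iff.2 hy
      rw [h1, h2, show ‖x‖ * ‖y‖ * (‖y‖⁻¹ * B xh y) = ‖x‖ * (‖y‖ * ‖y‖⁻¹) * B xh y by ring,
        mul_inv_cancel₀ hynz, mul_one]
    have hn : ContinuousAt (fun y : M => ‖y‖⁻¹ • y) y₀ :=
      ((continuous_norm.continuousAt).inv₀ (norm_ne_zero_iff.2 hy0)).smul continuousAt_id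
    have hBn : ContinuousAt (fun y : M => B xh (‖y‖⁻¹ • y)) y₀ := by
      have hdiff : Filter.Tendsto
          (fun y : M => B xh (‖y‖⁻¹ • y) - B xh (‖y₀‖⁻¹ • y₀)) (𝓝 y₀) (𝓝 0) := by
        refine squeeze_zero_norm'
          (a := fun y : M => κ * ‖(‖y‖⁻¹ • y) - (‖y₀‖⁻¹ • y₀)‖) ?_ ?_
        · filter_upwards [eventually_ne_nhds hy0] with y hy
          rw [Real.norm_eq_abs]
          exact hκ _ _ (hunit y hy) (hunit y₀ hy0)
        · have : Filter.Tendsto (fun y : M => κ * ‖(‖y‖⁻¹ • y) - (‖y₀‖⁻¹ • y₀)‖) (𝓝 y₀)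
              (𝓝 (κ * ‖(‖y₀‖⁻¹ • y₀) - (‖y₀‖⁻¹ • y₀)‖)) :=
            ((hn.sub continuousAt_const).norm).const_mul κ
          simpa using this
      have h2 : Filter.Tendsto
          (fun y : M => (B xh (‖y‖⁻¹ • y) - B xh (‖y₀‖⁻¹ • y₀)) + B xh (‖y₀‖⁻¹ • y₀))
          (𝓝 y₀) (𝓝 (0 + B xh (‖y₀‖⁻¹ • y₀))) := hdiff.add_const _
      simpa [ContinuousAt] using h2
    have hmain : ContinuousAt (fun y : M => ‖x‖ * ‖y‖ * B xh (‖y‖⁻¹ • y)) y₀ :=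
      (continuousAt_const.mul continuous_norm.continuousAt).mul hBn
    apply hmain.congr
    filter_upwards [eventually_ne_nhds hy0] with y hy
    exact (hrep y hy).symm


include hadd hsmul hschwartz hcompat hsmooth in
/-- L5: orthogonality-limit lemma. If `f` acts as `ρ • id` on `U`, commutes through `B`,
and is eventually contractive (relative to `ρ`) on `V`, then `B xu (yu + yv) = B xu yu`. -/
lemma aaOrth (hlip : ∀ x : M, ‖x‖ = 1 → ∃ κ : ℝ, ∀ y z : M, ‖y‖ = 1 → ‖z‖ = 1 →
      |B x y - B x z| ≤ κ * ‖y - z‖)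
    (U V : Submodule ℝ M) (f : M →ₗ[ℝ] M) (ρ σ : ℝ) (hρ : 0 < ρ) (hσ0 : 0 ≤ σ) (hσρ : σ < ρ)
    (hfU : ∀ x ∈ U, f x = ρ • x)
    (hfB : ∀ x y : M, B x (f y) = B (f x) y)
    (hfV : ∀ y ∈ V, ∃ C : ℝ, 0 ≤ C ∧ ∀ k : ℕ, ‖(f ^ k) y‖ ≤ C * σ ^ k) :
    ∀ xu ∈ U, ∀ yu ∈ U, ∀ yv ∈ V, B xu (yu + yv) = B xu yu := by
  have hiterU : ∀ (k : ℕ), ∀ x ∈ U, (f ^ k) x = ρ ^ k • x := by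
    intro k
    induction k with
    | zero => intro x _; simp
    | succ k ih =>
      intro x hx
      rw [pow_succ, Module.End.mul_apply, hfU x hx, map_smul, ih x hx, smul_smul, pow_succ]
      ring_nf
  have hiterB : ∀ (k : ℕ), ∀ x y : M, B x ((f ^ k) y) = B ((f ^ k) x) y := by
    intro k
    induction k with
    | zero => intro x y; simp
    | succ k ih =>
      intro x y
      rw [pow_succ, Module.End.mul_apply, ih x (f y), hfB]
      have hc : f ((f ^ k) x) = (f ^ k) (f x) := by
        rw [← Module.End.mul_apply, ← pow_succ', pow_succ, Module.End.mul_apply]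
      rw [hc, Module.End.mul_apply]
  intro xu hxu yu hyu yv hyv
  obtain ⟨C, hC0, hCb⟩ := hfV yv hyv
  set zk : ℕ → M := fun k => yu + (ρ ^ k)⁻¹ • (f ^ k) yv with hzk
  have hρk : ∀ k : ℕ, (ρ : ℝ) ^ k ≠ 0 := fun k => (pow_pos hρ k).ne'
  have hval : ∀ k, B xu (yu + yv) = B xu (zk k) := by
    intro k
    have h1 : B xu ((f ^ k) (yu + yv)) = ρ ^ k * B xu (yu + yv) := by
      rw [hiterB k, hiterU k xu hxu, hsmul]
    have h2 : (f ^ k) (yu + yv) = ρ ^ k • zk k := by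
      rw [map_add, hiterU k yu hyu, hzk]
      simp only [smul_add, smul_smul, mul_inv_cancel₀ (hρk k), one_smul]
    have h3 : B xu ((f ^ k) (yu + yv)) = ρ ^ k * B xu (zk k) := by
      rw [h2, aaHomog B hadd hsmul hschwartz hcompat hsmooth]
    have := h1.symm.trans h3
    exact mul_left_cancel₀ (hρk k) this
  have hlim : Filter.Tendsto zk Filter.atTop (𝓝 yu) := by
    have hdiff : Filter.Tendsto (fun k => zk k - yu) Filter.atTop (𝓝 0) := by
      apply squeeze_zero_norm (a := fun k => C * (σ / ρ) ^ k)
      · intro k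
        have hzz : zk k - yu = (ρ ^ k)⁻¹ • (f ^ k) yv := by rw [hzk]; abel_nf; simp
        rw [hzz, norm_smul, Real.norm_eq_abs, abs_of_pos (inv_pos.2 (pow_pos hρ k)),
          div_pow, div_eq_mul_inv]
        calc (ρ ^ k)⁻¹ * ‖(f ^ k) yv‖ ≤ (ρ ^ k)⁻¹ * (C * σ ^ k) :=
              mul_le_mul_of_nonneg_left (hCb k) (by positivity)
          _ = C * (σ ^ k * (ρ ^ k)⁻¹) := by ring
      · have h6 : Filter.Tendsto (fun k : ℕ => (σ / ρ) ^ k) Filter.atTop (𝓝 0) := by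
          apply tendsto_pow_atTop_nhds_zero_of_lt_one (div_nonneg hσ0 hρ.le)
          rw [div_lt_one hρ]; exact hσρ
        simpa using h6.const_mul C
    have := hdiff.add_const yu
    simpa using this
  have hcontB := (aaCont B hadd hsmul hschwartz hcompat hsmooth hlip xu).continuousAt (x := yu)
  have hcomp : Filter.Tendsto (fun k => B xu (zk k)) Filter.atTop (𝓝 (B xu yu)) :=
    hcontB.tendsto.comp hlim
  have hconst : Filter.Tendsto (fun k => B xu (zk k)) Filter.atTop (𝓝 (B xu (yu + yv))) := by
    have : (fun k => B xu (zk k)) = fun _ => B xu (yu + yv) := funext fun k => (hval k).symm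
    rw [this]; exact tendsto_const_nhds
  exact tendsto_nhds_unique hconst hcomp

include hadd hsmul hschwartz hcompat hsmooth in
/-- L7: Pythagoras from one-sided orthogonality. -/
lemma aaPythagoras (U V : Submodule ℝ M)
    (horth : ∀ xu ∈ U, ∀ yu ∈ U, ∀ yv ∈ V, B xu (yu + yv) = B xu yu) :
    ∀ u ∈ U, ∀ v ∈ V, ‖u + v‖ ^ 2 = ‖u‖ ^ 2 + ‖v‖ ^ 2 := by
  intro u hu v hv
  set f : ℝ → ℝ := fun t => ‖u + t • v‖ ^ 2 with hfdef
  have hf' : ∀ t : ℝ, HasDerivAt f (2 * B v (u + t • v)) t := by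
    intro t
    have hpath : HasDerivAt (fun t : ℝ => u + t • v) v t := by
      simpa using ((hasDerivAt_id t).smul_const v).const_add u
    have hcomp :=
      (aaHasFDeriv B hadd hsmul hschwartz hcompat hsmooth (u + t • v)).comp_hasDerivAt t hpath
    simp [aaBlin_apply] at hcomp
    exact hcomp
  have hfval : ∀ t : ℝ, f t = ‖u‖ ^ 2 + t * B v (u + t • v) := by
    intro t
    have h1 : f t = B (u + t • v) (u + t • v) := hcompat _
    rw [h1, hadd, hsmul, horth u hu u hu (t • v) (Submodule.smul_mem V t hv), ← hcompat]
  set h : ℝ → ℝ := fun t => (f t - ‖u‖ ^ 2) / t ^ 2 with hhdef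
  have hh' : ∀ t : ℝ, t ≠ 0 → HasDerivAt h 0 t := by
    intro t ht
    have hd := ((hf' t).sub_const (‖u‖ ^ 2)).div (hasDerivAt_pow 2 t) (pow_ne_zero 2 ht)
    refine hd.congr_deriv ?_
    rw [hfval t]
    field_simp
    ring
  have hconst : ∀ x : ℝ, 1 ≤ x → h x = h 1 := by
    intro x hx
    have := constant_of_has_deriv_right_zero (f := h) (a := 1) (b := x)
      (fun t htm => ((hh' t (by rw [Set.mem_Icc] at htm; linarith)).continuousAt).continuousWithinAt)
      (fun t htm => ((hh' t (by rw [Set.mem_Ico] at htm; linarith)).hasDerivWithinAt))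
    exact this x (Set.mem_Icc.2 ⟨hx, le_refl x⟩)
  have hlimit : Filter.Tendsto h Filter.atTop (𝓝 (‖v‖ ^ 2)) := by
    have hrewrite : ∀ x : ℝ, 0 < x → h x = ‖x⁻¹ • u + v‖ ^ 2 - ‖u‖ ^ 2 / x ^ 2 := by
      intro x hx
      have : ‖u + x • v‖ ^ 2 = x ^ 2 * ‖x⁻¹ • u + v‖ ^ 2 := by
        have : u + x • v = x • (x⁻¹ • u + v) := by
          rw [smul_add, smul_smul, mul_inv_cancel₀ hx.ne', one_smul]
        rw [this, norm_smul, mul_pow, Real.norm_eq_abs, sq_abs]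
      rw [hhdef]
      simp only [hfdef]
      rw [this]
      field_simp
    have h1 : Filter.Tendsto (fun x : ℝ => ‖x⁻¹ • u + v‖ ^ 2 - ‖u‖ ^ 2 / x ^ 2)
        Filter.atTop (𝓝 (‖v‖ ^ 2)) := by
      have ha : Filter.Tendsto (fun x : ℝ => x⁻¹ • u + v) Filter.atTop (𝓝 (0 + v)) := by
        apply Filter.Tendsto.add_const
        have := tendsto_inv_atTop_zero (𝕜 := ℝ)
        have h2 := this.smul_const u
        simpa using h2
      have hb : Filter.Tendsto (fun x : ℝ => ‖x⁻¹ • u + v‖ ^ 2) Filter.atTop (𝓝 (‖(0 : M) + v‖ ^ 2)) :=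
        ((continuous_norm.pow 2).continuousAt.tendsto).comp ha
      have hc : Filter.Tendsto (fun x : ℝ => ‖u‖ ^ 2 / x ^ 2) Filter.atTop (𝓝 0) := by
        apply Filter.Tendsto.div_atTop tendsto_const_nhds
        exact tendsto_pow_atTop (by norm_num)
      have := hb.sub hc
      simpa using this
    apply h1.congr'
    filter_upwards [Filter.eventually_gt_atTop (0 : ℝ)] with x hx
    exact (hrewrite x hx).symm
  have hconst' : Filter.Tendsto h Filter.atTop (𝓝 (h 1)) := by
    apply Filter.Tendsto.congr' _ (tendsto_const_nhds (x := h 1))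
    filter_upwards [Filter.eventually_ge_atTop (1 : ℝ)] with x hx
    exact (hconst x hx).symm
  have hph : h 1 = ‖v‖ ^ 2 := tendsto_nhds_unique hconst' hlimit
  have : f 1 - ‖u‖ ^ 2 = ‖v‖ ^ 2 := by
    have := hph
    rw [hhdef] at this
    simpa using this
  have hf1 : f 1 = ‖u + v‖ ^ 2 := by rw [hfdef]; norm_num
  linarith [hf1 ▸ this]

include hadd hsmul hschwartz hcompat hsmooth in
/-- L8: from the Pythagorean relation, B splits as a direct sum. -/
lemma aaSplit (U V : Submodule ℝ M)
    (hpyth : ∀ u ∈ U, ∀ v ∈ V, ‖u + v‖ ^ 2 = ‖u‖ ^ 2 + ‖v‖ ^ 2) :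
    ∀ xu ∈ U, ∀ yu ∈ U, ∀ xv ∈ V, ∀ yv ∈ V,
      B (xu + xv) (yu + yv) = B xu yu + B xv yv := by
  intro xu hxu yu hyu xv hxv yv hyv
  have hDn : ∀ (y w : M), HasDerivAt (fun t : ℝ => ‖y + t • w‖ ^ 2) (2 * B w (y + 0 • w)) 0 := by
    intro y w
    have hpath : HasDerivAt (fun t : ℝ => y + t • w) w 0 := by
      simpa using ((hasDerivAt_id (0 : ℝ)).smul_const w).const_add y
    have hcomp :=
      (aaHasFDeriv B hadd hsmul hschwartz hcompat hsmooth (y + (0:ℝ) • w)).comp_hasDerivAt 0 hpath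
    simp [aaBlin_apply] at hcomp
    rw [zero_smul, add_zero]
    exact hcomp
  have hGl : HasDerivAt (fun t : ℝ => ‖(yu + yv) + t • (xu + xv)‖ ^ 2)
      (2 * B (xu + xv) (yu + yv)) 0 := by
    have := hDn (yu + yv) (xu + xv)
    simpa using this
  have hGr : HasDerivAt (fun t : ℝ => ‖yu + t • xu‖ ^ 2 + ‖yv + t • xv‖ ^ 2)
      (2 * B xu yu + 2 * B xv yv) 0 := by
    have h1 := hDn yu xu
    have h2 := hDn yv xv
    have h3 := h1.add h2
    simp at h3
    exact h3
  have heq : (fun t : ℝ => ‖(yu + yv) + t • (xu + xv)‖ ^ 2)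
      = fun t : ℝ => ‖yu + t • xu‖ ^ 2 + ‖yv + t • xv‖ ^ 2 := by
    funext t
    have hmem1 : yu + t • xu ∈ U := U.add_mem hyu (U.smul_mem t hxu)
    have hmem2 : yv + t • xv ∈ V := V.add_mem hyv (V.smul_mem t hxv)
    have := hpyth _ hmem1 _ hmem2
    rw [← this, show yu + yv + t • (xu + xv) = yu + t • xu + (yv + t • xv) by module]
  rw [heq] at hGl
  have := hGl.unique hGr
  linarith
end Aux2

/-- In a smooth Minkowski space whose compatible semi-inner-product
satisfies the Lipschitz property, B is non-decomposable iff every diagonalizable adjoint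
abelian operator is a scalar multiple of an isometry. -/
theorem nondecomposable_iff_adjoint_abelian_isometry
    {M : Type*} [NormedAddCommGroup M] [NormedSpace ℝ M] [FiniteDimensional ℝ M]
    (B : M → M → ℝ)
    (hadd : ∀ x y z : M, B (x + y) z = B x z + B y z)
    (hsmul : ∀ (c : ℝ) (x y : M), B (c • x) y = c * B x y)
    (hpos : ∀ x : M, 0 ≤ B x x)
    (hdef : ∀ x : M, B x x = 0 → x = 0)
    (hschwartz : ∀ x y : M, (B x y) ^ 2 ≤ B x x * B y y)
    (hcompat : ∀ x : M, ‖x‖ ^ 2 = B x x)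
    (hsmooth : ∀ x : M, x ≠ 0 → DifferentiableAt ℝ (fun y : M => ‖y‖) x)
    (hlip : ∀ x : M, ‖x‖ = 1 → ∃ κ : ℝ, ∀ y z : M, ‖y‖ = 1 → ‖z‖ = 1 →
      |B x y - B x z| ≤ κ * ‖y - z‖) :
    -- (1) B is non-decomposable
    (¬ ∃ U V : Submodule ℝ M, U ≠ ⊥ ∧ V ≠ ⊥ ∧ IsCompl U V ∧
        ∀ xu ∈ U, ∀ yu ∈ U, ∀ xv ∈ V, ∀ yv ∈ V,
          B (xu + xv) (yu + yv) = B xu yu + B xv yv) ↔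
    -- (2) every diagonalizable adjoint abelian operator is a scalar multiple of an isometry
    (∀ A : M →ₗ[ℝ] M,
        (∃ (ι : Type) (b : Module.Basis ι ℝ M), ∀ i, ∃ μ : ℝ, A (b i) = μ • b i) →
        (∀ x y : M, B (A x) y = B x (A y)) →
        ∃ (c : ℝ) (T : M →ₗ[ℝ] M), (∀ x : M, ‖T x‖ = ‖x‖) ∧ ∀ x : M, A x = c • T x) := by
  constructor
  · -- (1) → (2)
    intro hnd A hdiag hA
    classical
    obtain ⟨ι, b, hb⟩ := hdiag
    rcases subsingleton_or_nontrivial M with hM | hM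
    · exact ⟨0, LinearMap.id, fun x => congrArg norm (Subsingleton.elim _ _),
        fun x => Subsingleton.elim _ _⟩
    haveI : Fintype ι := FiniteDimensional.fintypeBasisIndex b
    haveI : Nonempty ι := b.index_nonempty
    choose μ hμ using hb
    set r : ℝ := Finset.univ.sup' Finset.univ_nonempty (fun i => |μ i|) with hr
    have hler : ∀ i, |μ i| ≤ r := fun i => by
      rw [hr]; exact Finset.le_sup' (fun i => |μ i|) (Finset.mem_univ i)
    by_cases hex : ∃ j : ι, |μ j| < r
    · exfalso
      apply hnd
      obtain ⟨j, hj⟩ := hex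
      set s : Set ι := {i | |μ i| = r} with hs
      set U := Submodule.span ℝ (b '' s) with hUdef
      set V := Submodule.span ℝ (b '' sᶜ) with hVdef
      obtain ⟨i₀, -, hi₀⟩ := Finset.exists_mem_eq_sup' Finset.univ_nonempty (fun i => |μ i|)
      have hi₀s : i₀ ∈ s := hi₀.symm
      have hjs : j ∈ sᶜ := fun h => absurd h (ne_of_lt hj)
      set t : Finset ι := Finset.univ.filter (fun i => i ∈ sᶜ) with ht
      have hjt : j ∈ t := by simp [ht]; exact hjs
      have htne : t.Nonempty := ⟨j, hjt⟩
      set σ : ℝ := t.sup' htne (fun i => |μ i|) with hσ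
      have hσ0 : 0 ≤ σ := by
        rw [hσ]; exact le_trans (abs_nonneg (μ j)) (Finset.le_sup' (fun i => |μ i|) hjt)
      have hσr : σ < r := by
        rw [hσ, Finset.sup'_lt_iff]
        intro i hi
        have his : i ∈ sᶜ := by simpa [ht] using hi
        exact lt_of_le_of_ne (hler i) his
      have hrpos : 0 < r := lt_of_le_of_lt hσ0 hσr
      set f : M →ₗ[ℝ] M := A ∘ₗ A with hfdef
      have hfbi : ∀ i : ι, f (b i) = (μ i ^ 2) • b i := by
        intro i
        rw [hfdef, LinearMap.comp_apply, hμ i, map_smul, hμ i, smul_smul, pow_two]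
      have hfU : ∀ x ∈ U, f x = (r ^ 2) • x := by
        intro x hx
        induction hx using Submodule.span_induction with
        | mem x hxs =>
          obtain ⟨i, his, rfl⟩ := hxs
          rw [hfbi i]
          have : μ i ^ 2 = r ^ 2 := by
            have h1 : |μ i| = r := his
            nlinarith [sq_abs (μ i)]
          rw [this]
        | zero => simp
        | add x y hx hy ihx ihy => rw [map_add, ihx, ihy, smul_add]
        | smul a x hx ihx => rw [map_smul, ihx, smul_comm]
      have hfB : ∀ x y : M, B x (f y) = B (f x) y := by
        intro x y
        rw [hfdef, LinearMap.comp_apply, ← hA x (A y), ← hA (A x) y]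
        rfl
      have hfV : ∀ y ∈ V, ∃ C : ℝ, 0 ≤ C ∧ ∀ k : ℕ, ‖(f ^ k) y‖ ≤ C * (σ ^ 2) ^ k := by
        intro y hy
        induction hy using Submodule.span_induction with
        | mem y hys =>
          obtain ⟨i, his, rfl⟩ := hys
          refine ⟨‖b i‖, norm_nonneg _, ?_⟩
          have hfk : ∀ k : ℕ, (f ^ k) (b i) = ((μ i ^ 2) ^ k) • b i := by
            intro k
            induction k with
            | zero => simp
            | succ k ih =>
              rw [pow_succ, Module.End.mul_apply, hfbi i, map_smul, ih, smul_smul, pow_succ]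
              ring_nf
          intro k
          rw [hfk k, norm_smul, Real.norm_eq_abs, abs_pow, abs_pow, sq_abs]
          have hμσ : μ i ^ 2 ≤ σ ^ 2 := by
            have h1 : |μ i| ≤ σ := by
              rw [hσ]; exact Finset.le_sup' (fun i => |μ i|) (by simp [ht]; exact his)
            nlinarith [sq_abs (μ i), abs_nonneg (μ i)]
          have := pow_le_pow_left₀ (by positivity) hμσ k
          calc (μ i ^ 2) ^ k * ‖b i‖ ≤ (σ ^ 2) ^ k * ‖b i‖ :=
                mul_le_mul_of_nonneg_right this (norm_nonneg _)
            _ = ‖b i‖ * (σ ^ 2) ^ k := by ring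
        | zero => exact ⟨0, le_refl 0, fun k => by simp⟩
        | add x y hx hy ihx ihy =>
          obtain ⟨C₁, hC₁, h₁⟩ := ihx
          obtain ⟨C₂, hC₂, h₂⟩ := ihy
          refine ⟨C₁ + C₂, by linarith, fun k => ?_⟩
          rw [map_add]
          calc ‖(f ^ k) x + (f ^ k) y‖ ≤ ‖(f ^ k) x‖ + ‖(f ^ k) y‖ := norm_add_le _ _
            _ ≤ C₁ * (σ ^ 2) ^ k + C₂ * (σ ^ 2) ^ k := add_le_add (h₁ k) (h₂ k)
            _ = (C₁ + C₂) * (σ ^ 2) ^ k := by ring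
        | smul a x hx ihx =>
          obtain ⟨C, hC, h₁⟩ := ihx
          refine ⟨|a| * C, by positivity, fun k => ?_⟩
          rw [map_smul, norm_smul, Real.norm_eq_abs, mul_assoc]
          exact mul_le_mul_of_nonneg_left (h₁ k) (abs_nonneg a)
      have horth := aaOrth B hadd hsmul hschwartz hcompat hsmooth hlip U V f (r ^ 2) (σ ^ 2)
        (by positivity) (sq_nonneg σ) (by nlinarith) hfU hfB hfV
      have hpyth := aaPythagoras B hadd hsmul hschwartz hcompat hsmooth U V horth
      have hsplit := aaSplit B hadd hsmul hschwartz hcompat hsmooth U V hpyth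
      have hUne : U ≠ ⊥ := Submodule.ne_bot_iff U |>.2
        ⟨b i₀, Submodule.subset_span (Set.mem_image_of_mem b hi₀s), b.ne_zero i₀⟩
      have hVne : V ≠ ⊥ := Submodule.ne_bot_iff V |>.2
        ⟨b j, Submodule.subset_span (Set.mem_image_of_mem b hjs), b.ne_zero j⟩
      have hcompl : IsCompl U V := by
        constructor
        · rw [Submodule.disjoint_def]
          intro x hxU hxV
          rw [hUdef, Module.Basis.mem_span_image] at hxU
          rw [hVdef, Module.Basis.mem_span_image] at hxV
          have hsupp : (b.repr x).support = ∅ := by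
            rw [← Finset.subset_empty]
            intro i hi
            have h1 : i ∈ s := hxU (Finset.mem_coe.2 hi)
            have h2 : i ∈ sᶜ := hxV (Finset.mem_coe.2 hi)
            exact absurd h1 h2
          have : b.repr x = 0 := Finsupp.support_eq_empty.mp hsupp
          have := congrArg b.repr.symm this
          simpa using this
        · rw [codisjoint_iff, hUdef, hVdef, ← Submodule.span_union, ← Set.image_union,
            Set.union_compl_self, Set.image_univ, b.span_eq]
      exact ⟨U, V, hUne, hVne, hcompl, hsplit⟩
    · push_neg at hex
      have hall : ∀ i, |μ i| = r := fun i => le_antisymm (hler i) (hex i)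
      by_cases hr0 : r = 0
      · have hA0 : A = 0 := by
          apply b.ext
          intro i
          have h1 : |μ i| = 0 := by rw [hall i, hr0]
          rw [hμ i, abs_eq_zero.mp h1]
          simp
        exact ⟨0, LinearMap.id, fun x => rfl, fun x => by rw [hA0]; simp⟩
      · have hrpos : 0 < r :=
          lt_of_le_of_ne (le_trans (abs_nonneg (μ (Classical.arbitrary ι))) (hler _)) (Ne.symm hr0)
        have hA2 : ∀ x : M, A (A x) = (r ^ 2) • x := by
          have hAA : A ∘ₗ A = (r ^ 2) • LinearMap.id := by
            apply b.ext
            intro i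
            rw [LinearMap.comp_apply, hμ i, map_smul, hμ i, smul_smul]
            have : μ i * μ i = r ^ 2 := by nlinarith [sq_abs (μ i), hall i]
            rw [this]
            simp
          intro x
          have := LinearMap.ext_iff.mp hAA x
          simpa using this
        have hnormA : ∀ x : M, ‖A x‖ = r * ‖x‖ := by
          intro x
          have h1 : ‖A x‖ ^ 2 = r ^ 2 * ‖x‖ ^ 2 := by
            rw [hcompat, hA x (A x), hA2 x,
              aaHomog B hadd hsmul hschwartz hcompat hsmooth (r ^ 2) x x, ← hcompat]
          have h2 : (‖A x‖ - r * ‖x‖) * (‖A x‖ + r * ‖x‖) = 0 := by linear_combination h1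
          rcases mul_eq_zero.mp h2 with h3 | h3
          · linarith
          · have h4 := norm_nonneg (A x)
            have h5 := mul_nonneg hrpos.le (norm_nonneg x)
            linarith
        refine ⟨r, r⁻¹ • A, fun x => ?_, fun x => ?_⟩
        · rw [LinearMap.smul_apply, norm_smul, Real.norm_eq_abs, abs_of_pos (inv_pos.2 hrpos),
            hnormA, ← mul_assoc, inv_mul_cancel₀ hrpos.ne', one_mul]
        · rw [LinearMap.smul_apply, smul_smul, mul_inv_cancel₀ hrpos.ne', one_smul]
  · -- (2) → (1)
    intro h2
    rintro ⟨U, V, hU, hV, hcompl, hsum⟩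
    -- the projection onto U along V
    set A : M →ₗ[ℝ] M := U.subtype ∘ₗ (U.projectionOnto V hcompl) with hAdef
    have hAu : ∀ u ∈ U, A u = u := by
      intro u hu
      have := Submodule.projectionOnto_apply_left hcompl ⟨u, hu⟩
      simp only [hAdef, LinearMap.comp_apply, Submodule.subtype_apply]
      rw [show u = ((⟨u, hu⟩ : U) : M) from rfl, this]
    have hAv : ∀ v ∈ V, A v = 0 := by
      intro v hv
      have := Submodule.projectionOnto_apply_right hcompl ⟨v, hv⟩
      simp only [hAdef, LinearMap.comp_apply, Submodule.subtype_apply]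
      rw [show v = ((⟨v, hv⟩ : V) : M) from rfl, this]
      rfl
    -- decomposition of an arbitrary vector
    have hdecomp : ∀ x : M, ∃ u v : M, u ∈ U ∧ v ∈ V ∧ x = u + v := by
      intro x
      refine ⟨U.projectionOnto V hcompl x, V.projectionOnto U hcompl.symm x,
        (U.projectionOnto V hcompl x).2, (V.projectionOnto U hcompl.symm x).2, ?_⟩
      exact (Submodule.projection_add_projection_eq_self hcompl x).symm
    -- B of zero entries
    have hB0r : ∀ x : M, B x 0 = 0 := aaBzero_right B hschwartz hcompat
    have hB0l : ∀ y : M, B 0 y = 0 := aaBzero_left B hsmul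
    -- A is diagonalizable
    have hdiag : ∃ (ι : Type) (b : Module.Basis ι ℝ M), ∀ i, ∃ μ : ℝ, A (b i) = μ • b i := by
      set bU := Module.finBasis ℝ U
      set bV := Module.finBasis ℝ V
      refine ⟨Fin (Module.finrank ℝ U) ⊕ Fin (Module.finrank ℝ V),
        (bU.prod bV).map (Submodule.prodEquivOfIsCompl U V hcompl), ?_⟩
      rintro (i | i)
      · refine ⟨1, ?_⟩
        rw [one_smul, Module.Basis.map_apply]
        apply hAu
        rw [Module.Basis.prod_apply]
        simp [Submodule.coe_prodEquivOfIsCompl']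
      · refine ⟨0, ?_⟩
        rw [zero_smul, Module.Basis.map_apply]
        apply hAv
        rw [Module.Basis.prod_apply]
        simp [Submodule.coe_prodEquivOfIsCompl']
    -- A is adjoint abelian
    have habel : ∀ x y : M, B (A x) y = B x (A y) := by
      intro x y
      obtain ⟨xu, xv, hxu, hxv, rfl⟩ := hdecomp x
      obtain ⟨yu, yv, hyu, hyv, rfl⟩ := hdecomp y
      have hAx : A (xu + xv) = xu := by rw [map_add, hAu xu hxu, hAv xv hxv, add_zero]
      have hAy : A (yu + yv) = yu := by rw [map_add, hAu yu hyu, hAv yv hyv, add_zero]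
      rw [hAx, hAy]
      have e1 : B (xu + (0 : M)) (yu + yv) = B xu yu + B 0 yv :=
        hsum xu hxu yu hyu 0 V.zero_mem yv hyv
      have e2 : B (xu + xv) (yu + (0 : M)) = B xu yu + B xv 0 :=
        hsum xu hxu yu hyu xv hxv 0 V.zero_mem
      rw [add_zero] at e1
      rw [add_zero] at e2
      rw [e1, e2, hB0l, hB0r]
    obtain ⟨c, T, hT, hcT⟩ := h2 A hdiag habel
    -- contradiction
    obtain ⟨u, hu, hune⟩ := U.ne_bot_iff.mp hU
    obtain ⟨v, hv, hvne⟩ := V.ne_bot_iff.mp hV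
    have hc1 : |c| = 1 := by
      have h3 : ‖u‖ = |c| * ‖u‖ := by
        conv_lhs => rw [← hAu u hu, hcT u, norm_smul, Real.norm_eq_abs, hT u]
      have hun : ‖u‖ ≠ 0 := norm_ne_zero_iff.2 hune
      have h4 : (1 : ℝ) * ‖u‖ = |c| * ‖u‖ := by rw [one_mul]; exact h3
      exact (mul_right_cancel₀ hun h4).symm
    have hcne : c ≠ 0 := fun h => by simp [h] at hc1
    have hTv : c • T v = 0 := by rw [← hcT v, hAv v hv]
    have : T v = 0 := by
      rcases smul_eq_zero.mp hTv with h | h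
      · exact absurd h hcne
      · exact h
    have : ‖v‖ = 0 := by rw [← hT v, this, norm_zero]
    exact hvne (norm_eq_zero.mp this)
end

section
/- Let M be a smooth Minkowski space whose compatible semi-inner-product B satisfies the Lipschitz property, and suppose that no intersection of the unit sphere S = {x ∈ M : ‖x‖ = 1} with a two-dimensional linear subspace of M is an ellipse with the origin as its centre (i.e., for no two-dimensional subspace P is the restriction of the norm to P induced by an inner product on P). Then every diagonalizable linear operator on M that is adjoint abelian with respect to B is a scalar multiple of an isometry of M. -/
open Filter

set_option linter.unusedSectionVars false
set_option maxHeartbeats 1000000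

private lemma sip_rep {M : Type*} [NormedAddCommGroup M] [NormedSpace ℝ M]
    (hsmooth : ∀ x : M, x ≠ 0 → DifferentiableAt ℝ (fun y : M => ‖y‖) x)
    (w : M) (hw : w ≠ 0) (g : M → ℝ)
    (hgadd : ∀ u v : M, g (u + v) = g u + g v)
    (hgsmul : ∀ (c : ℝ) (u : M), g (c • u) = c * g u)
    (hgw : g w = ‖w‖ ^ 2) (hgb : ∀ v : M, |g v| ≤ ‖v‖ * ‖w‖) :
    ∀ v : M, g v = ‖w‖ * (fderiv ℝ (fun y : M => ‖y‖) w v) := by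
  intro v
  have hw' : 0 < ‖w‖ := norm_pos_iff.mpr hw
  set D := fderiv ℝ (fun y : M => ‖y‖) w with hD
  set c : ℝ := g v / ‖w‖ with hc
  set F : ℝ → ℝ := fun t => ‖w + t • v‖ - ‖w‖ - t * c with hF
  have h1 : HasDerivAt (fun t : ℝ => w + t • v) v 0 := by
    simpa using (((hasDerivAt_id (0:ℝ)).smul_const v).const_add w)
  have h2 : HasDerivAt (fun t : ℝ => ‖w + t • v‖) (D v) 0 := by
    have hd := (hsmooth w hw).hasFDerivAt
    have : HasFDerivAt (fun y : M => ‖y‖) D ((fun t : ℝ => w + t • v) 0) := by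
      simpa using hd
    exact this.comp_hasDerivAt 0 h1
  have hFd : HasDerivAt F (D v - c) 0 := by
    exact (h2.sub_const ‖w‖).sub (hasDerivAt_mul_const c)
  have hF0 : F 0 = 0 := by simp [hF]
  have hFpos : ∀ t : ℝ, 0 ≤ F t := by
    intro t
    have hb := hgb (w + t • v)
    have hg1 : g (w + t • v) = ‖w‖ ^ 2 + t * g v := by
      rw [hgadd, hgw, hgsmul]
    have h3 : ‖w‖ ^ 2 + t * g v ≤ ‖w + t • v‖ * ‖w‖ := by
      have := (abs_le.mp hb).2
      rw [hg1] at this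
      linarith
    have : ‖w‖ + t * c ≤ ‖w + t • v‖ := by
      rw [hc]
      rw [div_eq_inv_mul]
      have h4 := mul_le_mul_of_nonneg_right h3 (le_of_lt (inv_pos.mpr hw'))
      calc ‖w‖ + t * (‖w‖⁻¹ * g v)
          = (‖w‖ ^ 2 + t * g v) * ‖w‖⁻¹ := by field_simp
        _ ≤ (‖w + t • v‖ * ‖w‖) * ‖w‖⁻¹ := h4
        _ = ‖w + t • v‖ := by field_simp
    simp only [hF]; linarith
  have hmin : IsLocalMin F 0 := by
    apply Filter.Eventually.of_forall
    intro t; rw [hF0]; exact hFpos t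
  have := hmin.hasDerivAt_eq_zero hFd
  have hgv : g v = ‖w‖ * D v := by
    have h5 : D v = c := by linarith [this]
    rw [h5, hc]; field_simp
  exact hgv

section Aux

variable {M : Type*} [NormedAddCommGroup M] [NormedSpace ℝ M]
  (B : M → M → ℝ)
  (hadd : ∀ x y z : M, B (x + y) z = B x z + B y z)
  (hsmul : ∀ (c : ℝ) (x y : M), B (c • x) y = c * B x y)
  (hschwartz : ∀ x y : M, (B x y) ^ 2 ≤ B x x * B y y)
  (hcompat : ∀ x : M, ‖x‖ ^ 2 = B x x)
  (hsmooth : ∀ x : M, x ≠ 0 → DifferentiableAt ℝ (fun y : M => ‖y‖) x)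
  (hlip : ∀ x : M, ‖x‖ = 1 → ∃ κ : ℝ, ∀ y z : M, ‖y‖ = 1 → ‖z‖ = 1 →
      |B x y - B x z| ≤ κ * ‖y - z‖)

include hadd hsmul hschwartz hcompat hsmooth

private lemma B_zero_left : ∀ y : M, B 0 y = 0 := by
  intro y
  have := hsmul 0 0 y
  simpa using this

private lemma B_bound : ∀ v w : M, |B v w| ≤ ‖v‖ * ‖w‖ := by
  intro v w
  have h1 := hschwartz v w
  have h2 : B v v = ‖v‖ ^ 2 := (hcompat v).symm
  have h3 : B w w = ‖w‖ ^ 2 := (hcompat w).symm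
  rw [h2, h3] at h1
  have hnn : 0 ≤ ‖v‖ * ‖w‖ := by positivity
  rw [abs_le]
  constructor <;> nlinarith [sq_nonneg (B v w)]

private lemma B_rep : ∀ (v w : M), w ≠ 0 →
    B v w = ‖w‖ * (fderiv ℝ (fun y : M => ‖y‖) w v) := by
  intro v w hw
  exact sip_rep hsmooth w hw (fun u => B u w)
    (fun u u' => hadd u u' w) (fun c u => hsmul c u w)
    ((hcompat w).symm) (fun u => B_bound B hadd hsmul hschwartz hcompat hsmooth u w) v

private lemma B_zero_right : ∀ v : M, B v 0 = 0 := by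
  intro v
  have h := hschwartz v 0
  have h0 : B (0:M) (0:M) = 0 := by
    have := hcompat (0:M); simpa using this.symm
  rw [h0, mul_zero] at h
  nlinarith [sq_nonneg (B v 0)]

private lemma B_smul_right : ∀ (c : ℝ) (v w : M), B v (c • w) = c * B v w := by
  intro c v w
  rcases eq_or_ne c 0 with rfl | hc
  · simpa using B_zero_right B hadd hsmul hschwartz hcompat hsmooth v
  rcases eq_or_ne w 0 with rfl | hw
  · rw [smul_zero, B_zero_right B hadd hsmul hschwartz hcompat hsmooth v, mul_zero]
  have hcw : c • w ≠ 0 := smul_ne_zero hc hw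
  have h1 := B_rep B hadd hsmul hschwartz hcompat hsmooth v (c • w) hcw
  have h2 : ∀ u : M, c * B u w = ‖c • w‖ * (fderiv ℝ (fun y : M => ‖y‖) (c • w) u) := by
    apply sip_rep hsmooth (c • w) hcw (fun u => c * B u w)
    · intro u u'; rw [hadd]; ring
    · intro d u; rw [hsmul]; ring
    · rw [hsmul]
      rw [norm_smul]
      have : ‖w‖ ^ 2 = B w w := hcompat w
      simp only [Real.norm_eq_abs]
      nlinarith [sq_abs c]
    · intro u
      have := B_bound B hadd hsmul hschwartz hcompat hsmooth u w
      rw [abs_mul, norm_smul, Real.norm_eq_abs]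
      calc |c| * |B u w| ≤ |c| * (‖u‖ * ‖w‖) := by
            exact mul_le_mul_of_nonneg_left this (abs_nonneg c)
        _ = ‖u‖ * (|c| * ‖w‖) := by ring
  rw [h1, ← h2 v]

include hlip

private lemma B_cont_right (u : M) (w : ℕ → M) (wl : M) (hwl : wl ≠ 0) (hwn : ∀ n, w n ≠ 0)
    (hw : Tendsto w atTop (nhds wl)) :
    Tendsto (fun n => B u (w n)) atTop (nhds (B u wl)) := by
  have hBsr := B_smul_right B hadd hsmul hschwartz hcompat hsmooth
  rcases eq_or_ne u 0 with rfl | hu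
  · simp only [B_zero_left B hadd hsmul hschwartz hcompat hsmooth]
    exact tendsto_const_nhds
  · set uh : M := ‖u‖⁻¹ • u with huh
    have hu1 : ‖uh‖ = 1 := norm_smul_inv_norm hu
    obtain ⟨κ, hκ⟩ := hlip uh hu1
    set z : ℕ → M := fun n => ‖w n‖⁻¹ • w n with hz
    set zl : M := ‖wl‖⁻¹ • wl with hzl
    have hz1 : ∀ n, ‖z n‖ = 1 := fun n => norm_smul_inv_norm (hwn n)
    have hzl1 : ‖zl‖ = 1 := norm_smul_inv_norm hwl
    have hnorm : Tendsto (fun n => ‖w n‖) atTop (nhds ‖wl‖) :=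
      (continuous_norm.tendsto wl).comp hw
    have hzt : Tendsto z atTop (nhds zl) := by
      exact (hnorm.inv₀ (norm_ne_zero_iff.mpr hwl)).smul hw
    have hBz : Tendsto (fun n => B uh (z n)) atTop (nhds (B uh zl)) := by
      rw [tendsto_iff_dist_tendsto_zero]
      have hb : ∀ n, dist (B uh (z n)) (B uh zl) ≤ |κ| * ‖z n - zl‖ := by
        intro n
        rw [Real.dist_eq]
        calc |B uh (z n) - B uh zl| ≤ κ * ‖z n - zl‖ := hκ _ _ (hz1 n) hzl1
          _ ≤ |κ| * ‖z n - zl‖ := by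
              apply mul_le_mul_of_nonneg_right (le_abs_self κ) (norm_nonneg _)
      apply squeeze_zero (fun n => dist_nonneg) hb
      have : Tendsto (fun n => ‖z n - zl‖) atTop (nhds 0) := by
        have h0 : Tendsto (fun n => z n - zl) atTop (nhds (zl - zl)) :=
          hzt.sub tendsto_const_nhds
        rw [sub_self] at h0
        simpa [Function.comp_def] using (continuous_norm.tendsto (0:M)).comp h0
      simpa using this.const_mul |κ|
    have key : ∀ v : M, B u v = ‖u‖ * B uh v := by
      intro v
      conv_lhs => rw [show u = ‖u‖ • uh by rw [huh, smul_inv_smul₀ (norm_ne_zero_iff.mpr hu)]]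
      rw [hsmul]
    have key2 : ∀ n, B u (w n) = ‖u‖ * (‖w n‖ * B uh (z n)) := by
      intro n
      rw [key]
      congr 1
      conv_lhs => rw [show w n = ‖w n‖ • z n by
        rw [hz, smul_inv_smul₀ (norm_ne_zero_iff.mpr (hwn n))]]
      rw [hBsr]
    have keyl : B u wl = ‖u‖ * (‖wl‖ * B uh zl) := by
      rw [key]
      congr 1
      conv_lhs => rw [show wl = ‖wl‖ • zl by
        rw [hzl, smul_inv_smul₀ (norm_ne_zero_iff.mpr hwl)]]
      rw [hBsr]
    simp only [key2, keyl]
    exact (hnorm.mul hBz).const_mul ‖u‖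

private lemma plane_sym (A : M →ₗ[ℝ] M) (hAA : ∀ x y : M, B (A x) y = B x (A y))
    (x y : M) (hli : LinearIndependent ℝ ![x, y])
    (μ ν : ℝ) (hAx : A x = μ • x) (hAy : A y = ν • y) (hlt : |ν| < |μ|) :
    ∀ α β : ℝ, B x (α • x + β • y) = B (α • x + β • y) x := by
  have hBsr := B_smul_right B hadd hsmul hschwartz hcompat hsmooth
  have hμ : μ ≠ 0 := by
    intro h
    rw [h, abs_zero] at hlt
    exact absurd hlt (abs_nonneg ν).not_gt
  have hμν : μ ≠ ν := fun h => by rw [h] at hlt; exact lt_irrefl _ hlt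
  have hpair := LinearIndependent.pair_iff.mp hli
  have hBxy : B x y = 0 := by
    have h1 : B (A x) y = B x (A y) := hAA x y
    rw [hAx, hAy, hsmul, hBsr] at h1
    have h2 : (μ - ν) * B x y = 0 := by linarith
    rcases mul_eq_zero.mp h2 with h | h
    · exact absurd (sub_eq_zero.mp h) hμν
    · exact h
  have hByx : B y x = 0 := by
    have h1 : B (A y) x = B y (A x) := hAA y x
    rw [hAx, hAy, hsmul, hBsr] at h1
    have h2 : (ν - μ) * B y x = 0 := by linarith
    rcases mul_eq_zero.mp h2 with h | h
    · exact absurd (sub_eq_zero.mp h).symm hμν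
    · exact h
  intro α β
  rcases eq_or_ne α 0 with rfl | hα
  · rw [zero_smul, zero_add, hBsr, hsmul, hBxy, hByx]
  have hAAn : ∀ (n : ℕ) (u v : M), B ((A ^ n) u) v = B u ((A ^ n) v) := by
    intro n
    induction n with
    | zero => intro u v; simp
    | succ n ih =>
      intro u v
      rw [pow_succ, Module.End.mul_apply, ih (A u) v, hAA]
      rw [show A ((A ^ n) v) = (A ^ (n + 1)) v by rw [pow_succ', Module.End.mul_apply]]
      rw [pow_succ, Module.End.mul_apply]
  have hApowx : ∀ n : ℕ, (A ^ n) x = (μ ^ n) • x := by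
    intro n
    induction n with
    | zero => simp
    | succ n ih =>
      rw [pow_succ', Module.End.mul_apply, ih, map_smul, hAx, smul_smul, pow_succ']
      ring_nf
  have hApowy : ∀ n : ℕ, (A ^ n) y = (ν ^ n) • y := by
    intro n
    induction n with
    | zero => simp
    | succ n ih =>
      rw [pow_succ', Module.End.mul_apply, ih, map_smul, hAy, smul_smul, pow_succ']
      ring_nf
  set u : M := α • x + β • y with hu
  have hune : u ≠ 0 := by
    intro h
    exact hα (hpair α β h).1
  set r : ℝ := (ν / μ) ^ 2 with hr
  have hr0 : 0 ≤ r := sq_nonneg _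
  have hr1 : r < 1 := by
    rw [hr, sq_lt_one_iff_abs_lt_one, abs_div]
    exact (div_lt_one (abs_pos.mpr hμ)).mpr hlt
  set w : ℕ → M := fun n => α • x + (r ^ n * β) • y with hw
  have hwn : ∀ n, w n ≠ 0 := by
    intro n h
    exact hα (hpair α (r ^ n * β) h).1
  have hm : (0:ℝ) < μ ^ 2 := by positivity
  have hiter : ∀ n : ℕ, α * B x u + r ^ n * β * B y u = B u (w n) := by
    intro n
    have hmr : μ ^ 2 * r = ν ^ 2 := by rw [hr]; field_simp
    have hA2n : (A ^ (2 * n)) u = ((μ ^ 2) ^ n) • w n := by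
      rw [hu, map_add, LinearMap.map_smul, LinearMap.map_smul, hApowx, hApowy, hw]
      simp only [smul_add, smul_smul]
      congr 1
      · congr 1
        rw [pow_mul]
        ring
      · congr 1
        rw [pow_mul, ← hmr, mul_pow]
        ring
    have h1 : B ((A ^ (2 * n)) u) u = B u ((A ^ (2 * n)) u) := hAAn (2 * n) u u
    rw [hA2n, hsmul, hBsr] at h1
    have h2 : B (w n) u = α * B x u + r ^ n * β * B y u := by
      rw [hw]
      rw [hadd, hsmul, hsmul]
    have h3 := mul_left_cancel₀ (ne_of_gt (pow_pos hm n)) h1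
    rw [h2] at h3
    exact h3
  have hrlim : Tendsto (fun n : ℕ => r ^ n) atTop (nhds 0) :=
    tendsto_pow_atTop_nhds_zero_of_lt_one hr0 hr1
  have hxne : α • x ≠ 0 := by
    intro h
    have : α • x + (0:ℝ) • y = 0 := by simpa using h
    exact hα (hpair α 0 this).1
  have hwlim : Tendsto w atTop (nhds (α • x)) := by
    have : Tendsto (fun n : ℕ => α • x + (r ^ n * β) • y) atTop
        (nhds (α • x + (0 * β) • y)) := by
      apply Tendsto.const_add
      exact Tendsto.smul_const (hrlim.mul_const β) y
    simpa using this
  have hL : Tendsto (fun n : ℕ => α * B x u + r ^ n * β * B y u) atTop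
      (nhds (α * B x u)) := by
    have : Tendsto (fun n : ℕ => α * B x u + r ^ n * β * B y u) atTop
        (nhds (α * B x u + 0 * β * B y u)) := by
      apply Tendsto.const_add
      exact (hrlim.mul_const β).mul_const (B y u)
    simpa using this
  have hR : Tendsto (fun n : ℕ => B u (w n)) atTop (nhds (B u (α • x))) :=
    B_cont_right B hadd hsmul hschwartz hcompat hsmooth hlip u w (α • x) hxne hwn hwlim
  have hR' : Tendsto (fun n : ℕ => α * B x u + r ^ n * β * B y u) atTop
      (nhds (B u (α • x))) := by
    apply hR.congr
    intro n
    exact (hiter n).symm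
  have heq : α * B x u = B u (α • x) := tendsto_nhds_unique hL hR'
  rw [hBsr] at heq
  exact mul_left_cancel₀ hα heq

private lemma plane_norm (x y : M) (hy1 : ‖y‖ = 1)
    (hne : ∀ t : ℝ, x + t • y ≠ 0)
    (hBx1 : ∀ t : ℝ, B x (x + t • y) = 1) :
    ∀ t : ℝ, 0 < t → ‖x + t • y‖ ^ 2 = 1 + t ^ 2 := by
  set φ : ℝ → ℝ := fun t => ‖x + t • y‖ ^ 2 with hφ
  have hφd : ∀ t : ℝ, HasDerivAt φ (2 * B y (x + t • y)) t := by
    intro t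
    have hw := hne t
    have h1 : HasDerivAt (fun s : ℝ => x + s • y) y t := by
      simpa using ((hasDerivAt_id t).smul_const y).const_add x
    have hd := (hsmooth _ hw).hasFDerivAt
    have h2 : HasDerivAt (fun s : ℝ => ‖x + s • y‖)
        ((fderiv ℝ (fun z : M => ‖z‖) (x + t • y)) y) t :=
      HasFDerivAt.comp_hasDerivAt t hd h1
    have h3 := h2.pow 2
    refine h3.congr_deriv ?_
    rw [B_rep B hadd hsmul hschwartz hcompat hsmooth y (x + t • y) hw]
    push_cast
    ring
  have hφval : ∀ t : ℝ, φ t = 1 + t * B y (x + t • y) := by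
    intro t
    simp only [hφ]
    rw [hcompat]
    have h : B (x + t • y) (x + t • y) = B x (x + t • y) + t * B y (x + t • y) := by
      rw [hadd, hsmul]
    rw [h, hBx1]
  set g : ℝ → ℝ := fun t => (φ t - 1) / t ^ 2 with hg
  have hgd : ∀ t : ℝ, t ≠ 0 → HasDerivAt g 0 t := by
    intro t ht
    have h := ((hφd t).sub_const 1).div (hasDerivAt_pow 2 t) (pow_ne_zero 2 ht)
    refine h.congr_deriv ?_
    rw [div_eq_zero_iff]
    left
    rw [hφval t]
    push_cast
    ring
  have hconst : ∀ a s : ℝ, 0 < a → a ≤ s → g s = g a := by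
    intro a s ha has
    have hcont : ContinuousOn g (Set.Icc a s) := by
      intro t ht
      exact ((hgd t (ne_of_gt (lt_of_lt_of_le ha ht.1))).continuousAt).continuousWithinAt
    have hderiv : ∀ t ∈ Set.Ico a s, HasDerivWithinAt g 0 (Set.Ici t) t := by
      intro t ht
      exact (hgd t (ne_of_gt (lt_of_lt_of_le ha ht.1))).hasDerivWithinAt
    exact constant_of_has_deriv_right_zero hcont hderiv s (Set.right_mem_Icc.mpr has)
  intro t0 ht0
  have hlim1 : Tendsto g atTop (nhds (g t0)) := by
    apply Tendsto.congr' _ (tendsto_const_nhds (x := g t0))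
    filter_upwards [eventually_ge_atTop t0] with s hs
    exact (hconst t0 s ht0 hs).symm
  have hlim2 : Tendsto g atTop (nhds 1) := by
    set F : ℝ → ℝ := fun c => ‖c • x + y‖ ^ 2 - c ^ 2 with hF
    have hFc : Continuous F := by
      apply Continuous.sub
      · exact (((continuous_id.smul continuous_const).add continuous_const).norm).pow 2
      · exact continuous_pow 2
    have hF0 : F 0 = 1 := by simp [hF, hy1]
    have base : Tendsto (fun s : ℝ => F s⁻¹) atTop (nhds 1) := by
      rw [← hF0]
      exact (hFc.tendsto 0).comp tendsto_inv_atTop_zero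
    apply Tendsto.congr' _ base
    filter_upwards [eventually_ge_atTop (1:ℝ)] with s hs
    have hs0 : (0:ℝ) < s := lt_of_lt_of_le one_pos hs
    have hkey : ‖s⁻¹ • x + y‖ = s⁻¹ * ‖x + s • y‖ := by
      have : s⁻¹ • x + y = s⁻¹ • (x + s • y) := by
        rw [smul_add, smul_smul, inv_mul_cancel₀ (ne_of_gt hs0), one_smul]
      rw [this, norm_smul, Real.norm_eq_abs, abs_of_pos (inv_pos.mpr hs0)]
    simp only [hF, hg, hφ]
    rw [hkey]
    field_simp
  have h1 : g t0 = 1 := tendsto_nhds_unique hlim1 hlim2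
  have ht0' : t0 ^ 2 ≠ 0 := pow_ne_zero 2 (ne_of_gt ht0)
  simp only [hg] at h1
  have h2 := (div_eq_one_iff_eq ht0').mp h1
  show φ t0 = 1 + t0 ^ 2
  linarith

end Aux

section Aux2

variable {M : Type*} [NormedAddCommGroup M] [NormedSpace ℝ M]
  (B : M → M → ℝ)
  (hadd : ∀ x y z : M, B (x + y) z = B x z + B y z)
  (hsmul : ∀ (c : ℝ) (x y : M), B (c • x) y = c * B x y)
  (hschwartz : ∀ x y : M, (B x y) ^ 2 ≤ B x x * B y y)
  (hcompat : ∀ x : M, ‖x‖ ^ 2 = B x x)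
  (hsmooth : ∀ x : M, x ≠ 0 → DifferentiableAt ℝ (fun y : M => ‖y‖) x)
  (hlip : ∀ x : M, ‖x‖ = 1 → ∃ κ : ℝ, ∀ y z : M, ‖y‖ = 1 → ‖z‖ = 1 →
      |B x y - B x z| ≤ κ * ‖y - z‖)

include hadd hsmul hschwartz hcompat hsmooth hlip

private lemma make_ellipse (A : M →ₗ[ℝ] M) (hAA : ∀ x y : M, B (A x) y = B x (A y))
    (x y : M) (hx1 : ‖x‖ = 1) (hy1 : ‖y‖ = 1) (hli : LinearIndependent ℝ ![x, y])
    (μ ν : ℝ) (hAx : A x = μ • x) (hAy : A y = ν • y) (hlt : |ν| < |μ|) :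
    ∃ P : Submodule ℝ M, Module.finrank ℝ P = 2 ∧
      ∃ f : P →ₗ[ℝ] P →ₗ[ℝ] ℝ, (∀ u v : P, f u v = f v u) ∧ ∀ v : P, f v v = ‖v‖ ^ 2 := by
  have hBsr := B_smul_right B hadd hsmul hschwartz hcompat hsmooth
  have hpair := LinearIndependent.pair_iff.mp hli
  have hμν : μ ≠ ν := fun h => by rw [h] at hlt; exact lt_irrefl _ hlt
  have hBxx : B x x = 1 := by rw [← hcompat x, hx1]; norm_num
  have hByx : B y x = 0 := by
    have h1 : B (A y) x = B y (A x) := hAA y x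
    rw [hAx, hAy, hsmul, hBsr] at h1
    have h2 : (ν - μ) * B y x = 0 := by linarith
    rcases mul_eq_zero.mp h2 with h | h
    · exact absurd (sub_eq_zero.mp h).symm hμν
    · exact h
  have hByxN : B (-y) x = 0 := by
    rw [show (-y) = (-1 : ℝ) • y by simp, hsmul, hByx, mul_zero]
  have hsym := plane_sym B hadd hsmul hschwartz hcompat hsmooth hlip A hAA x y hli μ ν hAx hAy hlt
  have hliN : LinearIndependent ℝ ![x, -y] := by
    rw [LinearIndependent.pair_iff]
    intro s t hst
    have h : s • x + (-t) • y = 0 := by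
      rw [neg_smul, ← smul_neg]
      exact hst
    obtain ⟨h1, h2⟩ := hpair s (-t) h
    exact ⟨h1, neg_eq_zero.mp h2⟩
  have hAyN : A (-y) = ν • (-y) := by rw [map_neg, hAy, smul_neg]
  have hsymN := plane_sym B hadd hsmul hschwartz hcompat hsmooth hlip A hAA x (-y) hliN μ ν
    hAx hAyN hlt
  have hne : ∀ t : ℝ, x + t • y ≠ 0 := by
    intro t h
    have h' : (1:ℝ) • x + t • y = 0 := by rw [one_smul]; exact h
    exact one_ne_zero (hpair 1 t h').1
  have hneN : ∀ t : ℝ, x + t • (-y) ≠ 0 := by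
    intro t h
    have h' : (1:ℝ) • x + (-t) • y = 0 := by
      rw [one_smul, neg_smul, ← smul_neg]
      exact h
    exact one_ne_zero (hpair 1 (-t) h').1
  have hBx1 : ∀ t : ℝ, B x (x + t • y) = 1 := by
    intro t
    have h := hsym 1 t
    rw [one_smul] at h
    rw [h, hadd, hsmul, hBxx, hByx]
    ring
  have hBx1N : ∀ t : ℝ, B x (x + t • (-y)) = 1 := by
    intro t
    have h := hsymN 1 t
    rw [one_smul] at h
    rw [h, hadd, hsmul, hBxx, hByxN]
    ring
  have hnp := plane_norm B hadd hsmul hschwartz hcompat hsmooth hlip x y hy1 hne hBx1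
  have hnpN := plane_norm B hadd hsmul hschwartz hcompat hsmooth hlip x (-y)
    (by rwa [norm_neg]) hneN hBx1N
  have hnorm : ∀ t : ℝ, ‖x + t • y‖ ^ 2 = 1 + t ^ 2 := by
    intro t
    rcases lt_trichotomy t 0 with ht | ht | ht
    · have hrw : x + t • y = x + (-t) • (-y) := by
        rw [smul_neg, neg_smul, neg_neg]
      rw [hrw, hnpN (-t) (by linarith)]
      ring
    · subst ht; simp [hx1]
    · exact hnp t ht
  have habn : ∀ α β : ℝ, ‖α • x + β • y‖ ^ 2 = α ^ 2 + β ^ 2 := by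
    intro α β
    rcases eq_or_ne α 0 with rfl | hα
    · rw [zero_smul, zero_add, norm_smul, Real.norm_eq_abs, mul_pow, sq_abs, hy1]
      ring
    · have hrw : α • x + β • y = α • (x + (β / α) • y) := by
        rw [smul_add, smul_smul]
        field_simp
      rw [hrw, norm_smul, Real.norm_eq_abs, mul_pow, sq_abs, hnorm (β / α)]
      field_simp
  refine ⟨Submodule.span ℝ (Set.range ![x, y]), ?_, ?_⟩
  · rw [finrank_span_eq_card hli]
    simp
  · set bP := Module.Basis.span hli with hbP
    set c0 : _ →ₗ[ℝ] ℝ := bP.coord 0 with hc0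
    set c1 : _ →ₗ[ℝ] ℝ := bP.coord 1 with hc1
    refine ⟨LinearMap.mk₂ ℝ (fun u v => c0 u * c0 v + c1 u * c1 v)
      (fun m1 m2 n => by simp only [map_add]; ring)
      (fun c m n => by simp only [map_smul, smul_eq_mul]; ring)
      (fun m n1 n2 => by simp only [map_add]; ring)
      (fun c m n => by simp only [map_smul, smul_eq_mul]; ring), ?_, ?_⟩
    · intro u v
      simp only [LinearMap.mk₂_apply]
      ring
    · intro v
      have hrepr : (v : M) = (c0 v) • x + (c1 v) • y := by
        have h := bP.sum_repr v
        have h2 : ((∑ i, bP.repr v i • bP i : _) : M) = (v : M) := by rw [h]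
        rw [← h2]
        push_cast
        rw [Fin.sum_univ_two, Module.Basis.span_apply, Module.Basis.span_apply]
        simp only [hc0, hc1, Module.Basis.coord_apply, Matrix.cons_val_zero, Matrix.cons_val_one,
          Matrix.head_cons]
      rw [LinearMap.mk₂_apply, Submodule.coe_norm, hrepr, habn]
      ring

end Aux2

/-- If no two-dimensional central section of the unit sphere of a smooth
Minkowski space with Lipschitz semi-inner-product is an ellipse (i.e. no two-dimensional
subspace has its norm induced by an inner product), then every diagonalizable adjoint
abelian operator is a scalar multiple of an isometry. -/
theorem no_ellipse_section_adjoint_abelian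
    {M : Type*} [NormedAddCommGroup M] [NormedSpace ℝ M] [FiniteDimensional ℝ M]
    (B : M → M → ℝ)
    (hadd : ∀ x y z : M, B (x + y) z = B x z + B y z)
    (hsmul : ∀ (c : ℝ) (x y : M), B (c • x) y = c * B x y)
    (hpos : ∀ x : M, 0 ≤ B x x)
    (hdef : ∀ x : M, B x x = 0 → x = 0)
    (hschwartz : ∀ x y : M, (B x y) ^ 2 ≤ B x x * B y y)
    (hcompat : ∀ x : M, ‖x‖ ^ 2 = B x x)
    (hsmooth : ∀ x : M, x ≠ 0 → DifferentiableAt ℝ (fun y : M => ‖y‖) x)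
    (hlip : ∀ x : M, ‖x‖ = 1 → ∃ κ : ℝ, ∀ y z : M, ‖y‖ = 1 → ‖z‖ = 1 →
      |B x y - B x z| ≤ κ * ‖y - z‖)
    -- no two-dimensional subspace has its norm induced by an inner product:
    (hnoellipse : ¬ ∃ P : Submodule ℝ M, Module.finrank ℝ P = 2 ∧
        ∃ f : P →ₗ[ℝ] P →ₗ[ℝ] ℝ, (∀ u v : P, f u v = f v u) ∧ ∀ v : P, f v v = ‖v‖ ^ 2) :
    ∀ A : M →ₗ[ℝ] M,
      (∃ (ι : Type) (b : Module.Basis ι ℝ M), ∀ i, ∃ μ : ℝ, A (b i) = μ • b i) →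
      (∀ x y : M, B (A x) y = B x (A y)) →
      ∃ (c : ℝ) (T : M →ₗ[ℝ] M), (∀ x : M, ‖T x‖ = ‖x‖) ∧ ∀ x : M, A x = c • T x := by
  intro A hdiag hAA
  obtain ⟨ι, b, heig⟩ := hdiag
  choose μ hμ using heig
  have hBsr := B_smul_right B hadd hsmul hschwartz hcompat hsmooth
  have key : ∀ i j : ι, |μ j| < |μ i| → False := by
    intro i j hlt
    have hij : i ≠ j := by
      intro h
      rw [h] at hlt
      exact lt_irrefl _ hlt
    have hbi : b i ≠ 0 := b.ne_zero i
    have hbj : b j ≠ 0 := b.ne_zero j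
    set x : M := ‖b i‖⁻¹ • b i with hx
    set y : M := ‖b j‖⁻¹ • b j with hy
    have hx1 : ‖x‖ = 1 := norm_smul_inv_norm hbi
    have hy1 : ‖y‖ = 1 := norm_smul_inv_norm hbj
    have hAx : A x = μ i • x := by
      rw [hx, map_smul, hμ i, smul_comm]
    have hAy : A y = μ j • y := by
      rw [hy, map_smul, hμ j, smul_comm]
    have hb2 : LinearIndependent ℝ ![b i, b j] := by
      have hinj : Function.Injective (![i, j] : Fin 2 → ι) := by
        intro s t hst
        fin_cases s <;> fin_cases t <;> simp_all
      have hcomp := b.linearIndependent.comp ![i, j] hinj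
      have heqf : ((b : ι → M) ∘ ![i, j]) = ![b i, b j] := by
        funext s
        fin_cases s <;> simp
      rwa [heqf] at hcomp
    have hli : LinearIndependent ℝ ![x, y] := by
      rw [LinearIndependent.pair_iff]
      intro s t hst
      have h0 : (s * ‖b i‖⁻¹) • b i + (t * ‖b j‖⁻¹) • b j = 0 := by
        rw [mul_smul, mul_smul]
        exact hst
      obtain ⟨h1, h2⟩ := LinearIndependent.pair_iff.mp hb2 _ _ h0
      constructor
      · rcases mul_eq_zero.mp h1 with h | h
        · exact h
        · exact absurd h (inv_ne_zero (norm_ne_zero_iff.mpr hbi))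
      · rcases mul_eq_zero.mp h2 with h | h
        · exact h
        · exact absurd h (inv_ne_zero (norm_ne_zero_iff.mpr hbj))
    exact hnoellipse (make_ellipse B hadd hsmul hschwartz hcompat hsmooth hlip A hAA
      x y hx1 hy1 hli (μ i) (μ j) hAx hAy hlt)
  have hall : ∀ i j : ι, |μ i| = |μ j| := by
    intro i j
    by_contra h
    rcases lt_or_gt_of_ne h with hlt | hlt
    · exact key j i hlt
    · exact key i j hlt
  rcases isEmpty_or_nonempty ι with hE | hN
  · have hzero : ∀ x : M, x = 0 := by
      intro x
      have h1 : b.repr x = 0 := Subsingleton.elim _ _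
      have h2 := b.repr.symm_apply_apply x
      rw [h1, map_zero] at h2
      exact h2.symm
    refine ⟨0, LinearMap.id, fun x => rfl, fun x => ?_⟩
    rw [hzero (A x), hzero (0 • LinearMap.id x)]
  · obtain ⟨i0⟩ := hN
    set c : ℝ := |μ i0| with hc
    have habs : ∀ i, |μ i| = c := fun i => hall i i0
    rcases eq_or_ne c 0 with hc0 | hcne
    · have hA0 : ∀ x : M, A x = 0 := by
        have hAeq : A = 0 := by
          apply b.ext
          intro i
          have hμ0 : μ i = 0 := by
            have h := habs i
            rw [hc0, abs_eq_zero] at h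
            exact h
          rw [hμ i, hμ0, zero_smul, LinearMap.zero_apply]
        intro x
        rw [hAeq, LinearMap.zero_apply]
      refine ⟨0, LinearMap.id, fun x => rfl, fun x => ?_⟩
      rw [hA0 x, zero_smul]
    · have hcpos : 0 < c := lt_of_le_of_ne (hc ▸ abs_nonneg (μ i0)) (Ne.symm hcne)
      set T : M →ₗ[ℝ] M := c⁻¹ • A with hT
      have hTapp : ∀ x : M, T x = c⁻¹ • A x := fun x => rfl
      have hTT : ∀ x : M, T (T x) = x := by
        have hTT' : T ∘ₗ T = LinearMap.id := by
          apply b.ext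
          intro i
          simp only [LinearMap.comp_apply, hTapp, LinearMap.id_apply]
          rw [hμ i, map_smul, map_smul, hμ i]
          rw [smul_smul, smul_smul, smul_smul]
          have hsq : μ i ^ 2 = c ^ 2 := by
            rw [← sq_abs, habs i]
          have hone : c⁻¹ * c⁻¹ * μ i * μ i = 1 := by
            field_simp
            nlinarith [hsq]
          rw [hone, one_smul]
        intro x
        have h := congrArg (fun f => f x) hTT'
        simpa using h
      have hTadj : ∀ u v : M, B (T u) v = B u (T v) := by
        intro u v
        rw [hTapp, hTapp, hsmul, hBsr, hAA]
      have hiso : ∀ x : M, ‖T x‖ = ‖x‖ := by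
        intro x
        have h1 : ‖T x‖ ^ 2 = ‖x‖ ^ 2 := by
          rw [hcompat, hcompat, hTadj x (T x), hTT x]
        nlinarith [norm_nonneg (T x), norm_nonneg x]
      refine ⟨c, T, hiso, fun x => ?_⟩
      rw [hTapp, smul_smul, mul_inv_cancel₀ (ne_of_gt hcpos), one_smul]
end

section
/- Let M be a smooth Minkowski space with compatible semi-inner-product B. Then B satisfies the Lipschitz property if, and only if, for every x ∈ M the function y ↦ B(x,y) is uniformly continuous on M; that is, for every x ∈ M and every ε > 0 there is δ > 0 such that y, z ∈ M and ‖y − z‖ < δ imply |B(x,y) − B(x,z)| < ε. -/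
/-- The Lipschitz property holds iff for every x the function
y ↦ B(x,y) is uniformly continuous on M. -/
theorem lipschitz_iff_uniformly_continuous
    {M : Type*} [NormedAddCommGroup M] [NormedSpace ℝ M] [FiniteDimensional ℝ M]
    (B : M → M → ℝ)
    (hadd : ∀ x y z : M, B (x + y) z = B x z + B y z)
    (hsmul : ∀ (c : ℝ) (x y : M), B (c • x) y = c * B x y)
    (hpos : ∀ x : M, 0 ≤ B x x)
    (hdef : ∀ x : M, B x x = 0 → x = 0)
    (hschwartz : ∀ x y : M, (B x y) ^ 2 ≤ B x x * B y y)
    (hcompat : ∀ x : M, ‖x‖ ^ 2 = B x x)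
    (hsmooth : ∀ x : M, x ≠ 0 → DifferentiableAt ℝ (fun y : M => ‖y‖) x) :
    (∀ x : M, ‖x‖ = 1 → ∃ κ : ℝ, ∀ y z : M, ‖y‖ = 1 → ‖z‖ = 1 →
        |B x y - B x z| ≤ κ * ‖y - z‖) ↔
    (∀ x : M, ∀ ε : ℝ, 0 < ε → ∃ δ : ℝ, 0 < δ ∧ ∀ y z : M, ‖y - z‖ < δ →
        |B x y - B x z| < ε) := by
  -- Cauchy–Schwarz consequences
  have hCS : ∀ q p : M, B q p ≤ ‖q‖ * ‖p‖ := by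
    intro q p
    have h := hschwartz q p
    rw [← hcompat q, ← hcompat p] at h
    have hb : 0 ≤ ‖q‖ * ‖p‖ := mul_nonneg (norm_nonneg q) (norm_nonneg p)
    have h2 : (B q p) ^ 2 ≤ (‖q‖ * ‖p‖) ^ 2 := by nlinarith
    calc B q p ≤ |B q p| := le_abs_self _
      _ ≤ ‖q‖ * ‖p‖ := by
          rw [← Real.sqrt_sq_eq_abs, ← Real.sqrt_sq hb]
          exact Real.sqrt_le_sqrt h2
  have habs : ∀ q p : M, |B q p| ≤ ‖q‖ * ‖p‖ := by
    intro q p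
    rw [abs_le]
    constructor
    · have h1 := hCS (-q) p
      have h2 : B (-q) p = -B q p := by
        have := hsmul (-1) q p; simpa using this
      rw [h2, norm_neg] at h1
      linarith
    · exact hCS q p
  have hB0 : ∀ x : M, B x 0 = 0 := by
    intro x
    have h := habs x (0 : M)
    simp at h
    exact h
  -- base inequality
  have hbase : ∀ (x p : M) (s : ℝ), s * B x p ≤ (‖p + s • x‖ - ‖p‖) * ‖p‖ := by
    intro x p s
    have h1 : B (p + s • x) p ≤ ‖p + s • x‖ * ‖p‖ := hCS _ _
    have h2 : B (p + s • x) p = B p p + s * B x p := by rw [hadd, hsmul]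
    have h3 := hcompat p
    nlinarith
  -- the value of B x y is pinned down by the base inequality
  have hval : ∀ (x y : M), y ≠ 0 → ∀ a : ℝ,
      (∀ t : ℝ, t * a ≤ (‖y + t • x‖ - ‖y‖) * ‖y‖) →
      a = ‖y‖ * (fderiv ℝ (fun z : M => ‖z‖) y) x := by
    intro x y hy a ha
    set L := fderiv ℝ (fun z : M => ‖z‖) y with hL
    have hdiff : HasFDerivAt (fun z : M => ‖z‖) L y := (hsmooth y hy).hasFDerivAt
    have hc : HasDerivAt (fun t : ℝ => y + t • x) x 0 := by
      simpa using ((hasDerivAt_id (0 : ℝ)).smul_const x).const_add y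
    have hdiff' : HasFDerivAt (fun z : M => ‖z‖) L (y + (0 : ℝ) • x) := by
      simpa using hdiff
    have hn : HasDerivAt (fun t : ℝ => ‖y + t • x‖) (L x) 0 :=
      hdiff'.comp_hasDerivAt 0 hc
    have hf : HasDerivAt (fun t : ℝ => (‖y + t • x‖ - ‖y‖) * ‖y‖ - t * a)
        (L x * ‖y‖ - a) 0 := by
      have := ((hn.sub_const ‖y‖).mul_const ‖y‖).sub ((hasDerivAt_id (0 : ℝ)).mul_const a)
      rw [one_mul] at this; exact this
    have hmin : IsLocalMin (fun t : ℝ => (‖y + t • x‖ - ‖y‖) * ‖y‖ - t * a) 0 := by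
      refine Filter.Eventually.of_forall fun t => ?_
      have h1 := ha t
      simp only
      have h0 : (‖y + (0 : ℝ) • x‖ - ‖y‖) * ‖y‖ - 0 * a = 0 := by simp
      rw [h0]
      linarith
    have hz := hmin.hasDerivAt_eq_zero hf
    linear_combination -hz
  -- positive homogeneity in the second variable
  have hhom : ∀ (x y : M) (c : ℝ), 0 < c → B x (c • y) = c * B x y := by
    intro x y c hc
    by_cases hy : y = 0
    · subst hy; simp [hB0]
    · have h1 := hval x y hy (B x y) (fun t => hbase x y t)
      have h2 : c⁻¹ * B x (c • y) = ‖y‖ * (fderiv ℝ (fun z : M => ‖z‖) y) x := by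
        refine hval x y hy _ fun t => ?_
        have h := hbase x (c • y) (c * t)
        have he : ‖c • y + (c * t) • x‖ = c * ‖y + t • x‖ := by
          rw [show c • y + (c * t) • x = c • (y + t • x) by
            rw [smul_add, smul_smul]]
          rw [norm_smul, Real.norm_eq_abs, abs_of_pos hc]
        have hcy : ‖c • y‖ = c * ‖y‖ := by
          rw [norm_smul, Real.norm_eq_abs, abs_of_pos hc]
        rw [he, hcy] at h
        have heq : t * (c⁻¹ * B x (c • y)) = (c * t * B x (c • y)) / c ^ 2 := by
          field_simp
        rw [heq, div_le_iff₀ (by positivity)]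
        nlinarith [h]
      have h3 : c⁻¹ * B x (c • y) = B x y := h2.trans h1.symm
      rw [← h3, ← mul_assoc, mul_inv_cancel₀ hc.ne', one_mul]
  -- a norm estimate for normalized vectors
  have hsub : ∀ y z : M, y ≠ 0 → z ≠ 0 →
      ‖z‖ * ‖‖y‖⁻¹ • y - ‖z‖⁻¹ • z‖ ≤ 2 * ‖y - z‖ := by
    intro y z hy hz
    have hny : ‖y‖ ≠ 0 := norm_ne_zero_iff.mpr hy
    have hnz : ‖z‖ ≠ 0 := norm_ne_zero_iff.mpr hz
    have e : ‖z‖ • (‖y‖⁻¹ • y - ‖z‖⁻¹ • z) = (y - z) + (‖z‖ * ‖y‖⁻¹ - 1) • y := by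
      match_scalars <;> field_simp <;> ring
    have e2 : ‖z‖ * ‖‖y‖⁻¹ • y - ‖z‖⁻¹ • z‖ = ‖(y - z) + (‖z‖ * ‖y‖⁻¹ - 1) • y‖ := by
      rw [← e, norm_smul, Real.norm_eq_abs, abs_of_nonneg (norm_nonneg z)]
    rw [e2]
    calc ‖(y - z) + (‖z‖ * ‖y‖⁻¹ - 1) • y‖
        ≤ ‖y - z‖ + ‖(‖z‖ * ‖y‖⁻¹ - 1) • y‖ := norm_add_le _ _
      _ ≤ 2 * ‖y - z‖ := by
          rw [norm_smul, Real.norm_eq_abs]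
          have h3 : |‖z‖ * ‖y‖⁻¹ - 1| * ‖y‖ = |(‖z‖ * ‖y‖⁻¹ - 1) * ‖y‖| := by
            rw [abs_mul, abs_of_nonneg (norm_nonneg y)]
          have h4 : (‖z‖ * ‖y‖⁻¹ - 1) * ‖y‖ = ‖z‖ - ‖y‖ := by field_simp
          have h5 : |‖z‖ - ‖y‖| ≤ ‖z - y‖ := abs_norm_sub_norm_le z y
          rw [h3, h4]
          rw [norm_sub_rev z y] at h5
          linarith
  constructor
  · -- Lipschitz ⇒ uniform continuity
    intro H x ε hε
    by_cases hx : x = 0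
    · refine ⟨1, one_pos, fun y z _ => ?_⟩
      subst hx
      have h1 : B (0 : M) y = 0 := by simpa using hsmul 0 0 y
      have h2 : B (0 : M) z = 0 := by simpa using hsmul 0 0 z
      simp [h1, h2, hε]
    · set u := ‖x‖⁻¹ • x with hu_def
      have hu : ‖u‖ = 1 := norm_smul_inv_norm hx
      obtain ⟨κ0, hκ0⟩ := H u hu
      set κ := max κ0 0 with hκdef
      have hκnn : (0 : ℝ) ≤ κ := le_max_right _ _
      have hκ : ∀ y z : M, ‖y‖ = 1 → ‖z‖ = 1 → |B u y - B u z| ≤ κ * ‖y - z‖ := by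
        intro y z hy hz
        exact (hκ0 y z hy hz).trans
          (mul_le_mul_of_nonneg_right (le_max_left _ _) (norm_nonneg _))
      have hLip : ∀ y z : M, |B u y - B u z| ≤ (1 + 2 * κ) * ‖y - z‖ := by
        intro y z
        by_cases hy : y = 0
        · subst hy
          have h1 : |B u 0 - B u z| = |B u z| := by rw [hB0]; simp
          have h2 : |B u z| ≤ ‖z‖ := by
            have := habs u z; rw [hu, one_mul] at this; exact this
          have h3 : ‖(0 : M) - z‖ = ‖z‖ := by simp
          rw [h1, h3]
          nlinarith [norm_nonneg z]
        · by_cases hz : z = 0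
          · subst hz
            have h1 : |B u y - B u 0| = |B u y| := by rw [hB0]; simp
            have h2 : |B u y| ≤ ‖y‖ := by
              have := habs u y; rw [hu, one_mul] at this; exact this
            have h3 : ‖y - (0 : M)‖ = ‖y‖ := by simp
            rw [h1, h3]
            nlinarith [norm_nonneg y]
          · have hny : ‖y‖ ≠ 0 := norm_ne_zero_iff.mpr hy
            have hnz : ‖z‖ ≠ 0 := norm_ne_zero_iff.mpr hz
            set yh := ‖y‖⁻¹ • y with hyh_def
            set zh := ‖z‖⁻¹ • z with hzh_def
            have hyh : ‖yh‖ = 1 := norm_smul_inv_norm hy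
            have hzh : ‖zh‖ = 1 := norm_smul_inv_norm hz
            have h1 : B u y = ‖y‖ * B u yh := by
              have := hhom u yh ‖y‖ (norm_pos_iff.mpr hy)
              rwa [hyh_def, smul_inv_smul₀ hny] at this
            have h2 : B u z = ‖z‖ * B u zh := by
              have := hhom u zh ‖z‖ (norm_pos_iff.mpr hz)
              rwa [hzh_def, smul_inv_smul₀ hnz] at this
            have e : B u y - B u z = (‖y‖ - ‖z‖) * B u yh + ‖z‖ * (B u yh - B u zh) := by
              rw [h1, h2]; ring
            have hb1 : |B u yh| ≤ 1 := by
              have := habs u yh; rw [hu, hyh, one_mul] at this; exact this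
            have hb2 : |B u yh - B u zh| ≤ κ * ‖yh - zh‖ := hκ yh zh hyh hzh
            have hb3 : ‖z‖ * ‖yh - zh‖ ≤ 2 * ‖y - z‖ := hsub y z hy hz
            have hb4 : |‖y‖ - ‖z‖| ≤ ‖y - z‖ := abs_norm_sub_norm_le y z
            calc |B u y - B u z|
                ≤ |(‖y‖ - ‖z‖) * B u yh| + |‖z‖ * (B u yh - B u zh)| := by
                  rw [e]; exact abs_add_le _ _
              _ = |‖y‖ - ‖z‖| * |B u yh| + ‖z‖ * |B u yh - B u zh| := by
                  rw [abs_mul, abs_mul, abs_of_nonneg (norm_nonneg z)]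
              _ ≤ (1 + 2 * κ) * ‖y - z‖ := by
                  nlinarith [abs_nonneg (B u yh), abs_nonneg (‖y‖ - ‖z‖),
                    norm_nonneg (z), norm_nonneg (y - z), norm_nonneg (yh - zh),
                    abs_nonneg (B u yh - B u zh),
                    mul_le_mul_of_nonneg_left hb2 (norm_nonneg z)]
      set C := (1 + 2 * κ) * ‖x‖ + 1 with hC_def
      have hCpos : 0 < C := by positivity
      refine ⟨ε / C, by positivity, fun y z hyz => ?_⟩
      have hxu : x = ‖x‖ • u := (smul_inv_smul₀ (norm_ne_zero_iff.mpr hx) x).symm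
      have hBy : ∀ w : M, B x w = ‖x‖ * B u w := by
        intro w
        have := hsmul ‖x‖ u w
        rwa [← hxu] at this
      rw [hBy y, hBy z, ← mul_sub, abs_mul, abs_of_nonneg (norm_nonneg x)]
      have h9 : ‖y - z‖ * C < ε := (lt_div_iff₀ hCpos).mp hyz
      rw [hC_def] at h9
      have h6 := hLip y z
      have h7 : ‖x‖ * |B u y - B u z| ≤ ‖x‖ * ((1 + 2 * κ) * ‖y - z‖) :=
        mul_le_mul_of_nonneg_left h6 (norm_nonneg x)
      nlinarith [norm_nonneg (y - z), abs_nonneg (B u y - B u z)]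
  · -- uniform continuity ⇒ Lipschitz
    intro H x hx
    obtain ⟨δ, hδ, hH⟩ := H x 1 one_pos
    refine ⟨2 / δ, fun y z hy hz => ?_⟩
    by_cases hyz : y = z
    · subst hyz; simp
    · have ht : 0 < ‖y - z‖ := norm_pos_iff.mpr (sub_ne_zero.mpr hyz)
      set c := 2 * ‖y - z‖ / δ with hcdef
      have hc : 0 < c := by positivity
      have h1 : B x y = c * B x (c⁻¹ • y) := by
        have := hhom x (c⁻¹ • y) c hc
        rw [smul_inv_smul₀ hc.ne'] at this
        exact this
      have h2 : B x z = c * B x (c⁻¹ • z) := by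
        have := hhom x (c⁻¹ • z) c hc
        rw [smul_inv_smul₀ hc.ne'] at this
        exact this
      have hd : ‖c⁻¹ • y - c⁻¹ • z‖ < δ := by
        rw [← smul_sub, norm_smul, Real.norm_eq_abs, abs_of_pos (inv_pos.mpr hc)]
        have he : c⁻¹ * ‖y - z‖ = δ / 2 := by
          rw [hcdef]; field_simp
        rw [he]; linarith
      have h3 := hH _ _ hd
      rw [h1, h2, ← mul_sub, abs_mul, abs_of_pos hc]
      calc c * |B x (c⁻¹ • y) - B x (c⁻¹ • z)| ≤ c * 1 :=
            mul_le_mul_of_nonneg_left h3.le hc.le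
        _ = 2 / δ * ‖y - z‖ := by rw [hcdef]; ring
end

section
/- Let M be a smooth Minkowski space whose compatible semi-inner-product B satisfies the Lipschitz property, and let A : M → M be a diagonalizable linear operator that is adjoint abelian with respect to B. Write each x ∈ M uniquely as x = x_1 + … + x_k with x_i ∈ Ē_i. If z ∈ Ē_i for some i ∈ {1, …, k}, then B(z, x) = B(z, x_i). -/
section Aux
variable {M : Type*} [NormedAddCommGroup M] [NormedSpace ℝ M]
variable (B : M → M → ℝ)

lemma sip_zero_right (hschwartz : ∀ x y : M, (B x y) ^ 2 ≤ B x x * B y y)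
    (hcompat : ∀ x : M, ‖x‖ ^ 2 = B x x) (u : M) : B u 0 = 0 := by
  have h0 : B (0:M) 0 = 0 := by have := hcompat (0:M); simpa using this.symm
  have := hschwartz u 0
  rw [h0, mul_zero] at this
  exact pow_eq_zero_iff (n := 2) (by norm_num) |>.mp (le_antisymm this (sq_nonneg _))

lemma sip_zero_left (hsmul : ∀ (c : ℝ) (x y : M), B (c • x) y = c * B x y) (y : M) :
    B 0 y = 0 := by
  have := hsmul 0 0 y
  simpa using this

lemma sip_abs_le (hschwartz : ∀ x y : M, (B x y) ^ 2 ≤ B x x * B y y)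
    (hcompat : ∀ x : M, ‖x‖ ^ 2 = B x x) (u y : M) : |B u y| ≤ ‖u‖ * ‖y‖ := by
  have h := hschwartz u y
  rw [← hcompat, ← hcompat] at h
  have : (B u y)^2 ≤ (‖u‖ * ‖y‖)^2 := by rw [mul_pow]; exact h
  have h2 := Real.sqrt_le_sqrt this
  rwa [Real.sqrt_sq_eq_abs, Real.sqrt_sq (by positivity)] at h2

/-- Key derivative formula. -/
lemma sip_hasDerivAt
    (hadd : ∀ x y z : M, B (x + y) z = B x z + B y z)
    (hsmul : ∀ (c : ℝ) (x y : M), B (c • x) y = c * B x y)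
    (hschwartz : ∀ x y : M, (B x y) ^ 2 ≤ B x x * B y y)
    (hcompat : ∀ x : M, ‖x‖ ^ 2 = B x x)
    (hsmooth : ∀ x : M, x ≠ 0 → DifferentiableAt ℝ (fun y : M => ‖y‖) x)
    (z y : M) (τ : ℝ) :
    HasDerivAt (fun t : ℝ => ‖y + t • z‖^2/2) (B z (y + τ • z)) τ := by
  set y' := y + τ • z with hy'
  set g : ℝ → ℝ := fun t => ‖y + t • z‖^2/2 with hg
  have hrw : ∀ t : ℝ, y + t • z = y' + (t - τ) • z := by
    intro t; rw [hy']; rw [sub_smul]; abel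
  -- lower bound
  have hlb : ∀ t : ℝ, g τ + (t - τ) * B z y' ≤ g t := by
    intro t
    have h1 : B (y' + (t - τ) • z) y' = ‖y'‖^2 + (t - τ) * B z y' := by
      rw [hadd, hsmul, hcompat]
    have h2 : B (y' + (t - τ) • z) y' ≤ ‖y' + (t - τ) • z‖ * ‖y'‖ :=
      le_trans (le_abs_self _) (sip_abs_le B hschwartz hcompat _ _)
    have h3 : ‖y' + (t - τ) • z‖ * ‖y'‖ ≤ ‖y' + (t - τ) • z‖^2/2 + ‖y'‖^2/2 := by
      nlinarith [sq_nonneg (‖y' + (t - τ) • z‖ - ‖y'‖)]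
    have h4 : g t = ‖y' + (t - τ) • z‖^2/2 := by rw [hg]; simp only [hrw t]
    have h5 : g τ = ‖y'‖^2/2 := by show ‖y + τ • z‖^2/2 = _; rw [← hy']
    rw [h4, h5]; linarith
  -- differentiability
  have hdiff : DifferentiableAt ℝ g τ := by
    by_cases h0 : y' = 0
    · have : g = fun t => (t - τ)^2 * ‖z‖^2 / 2 := by
        funext t
        rw [hg]; simp only [hrw t, h0, zero_add, norm_smul, mul_pow, Real.norm_eq_abs, sq_abs]
      rw [this]; fun_prop
    · have hin : DifferentiableAt ℝ (fun t : ℝ => y + t • z) τ := by fun_prop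
      have hn : DifferentiableAt ℝ (fun t : ℝ => ‖y + t • z‖) τ :=
        (hsmooth y' h0).comp τ hin
      exact (hn.pow 2).div_const 2
  -- local min argument
  have hmin : IsLocalMin (fun t => g t - ((t - τ) * B z y' + g τ)) τ := by
    refine Filter.Eventually.of_forall (fun t => ?_)
    have := hlb t
    simp only [sub_self, zero_mul, zero_add]
    linarith
  have hDg : HasDerivAt g (deriv g τ) τ := hdiff.hasDerivAt
  have haff : HasDerivAt (fun t : ℝ => (t - τ) * B z y' + g τ) (B z y') τ := by
    have : HasDerivAt (fun t : ℝ => t - τ) 1 τ := (hasDerivAt_id τ).sub_const τ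
    simpa using (this.mul_const (B z y')).add_const (g τ)
  have hsub : HasDerivAt (fun t => g t - ((t - τ) * B z y' + g τ)) (deriv g τ - B z y') τ :=
    hDg.sub haff
  have h0 : deriv g τ - B z y' = 0 := hmin.hasDerivAt_eq_zero hsub
  have : deriv g τ = B z y' := by linarith
  rw [← this]; exact hDg


lemma sip_homog
    (hadd : ∀ x y z : M, B (x + y) z = B x z + B y z)
    (hsmul : ∀ (c : ℝ) (x y : M), B (c • x) y = c * B x y)
    (hschwartz : ∀ x y : M, (B x y) ^ 2 ≤ B x x * B y y)
    (hcompat : ∀ x : M, ‖x‖ ^ 2 = B x x)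
    (hsmooth : ∀ x : M, x ≠ 0 → DifferentiableAt ℝ (fun y : M => ‖y‖) x)
    (z y : M) {t : ℝ} (ht : 0 < t) : B z (t • y) = t * B z y := by
  have H1 : HasDerivAt (fun s : ℝ => ‖y + s • z‖^2/2) (B z y) 0 := by
    have := sip_hasDerivAt B hadd hsmul hschwartz hcompat hsmooth z y 0
    simpa using this
  have H2 : HasDerivAt (fun s : ℝ => ‖t • y + s • z‖^2/2) (B z (t • y)) 0 := by
    have := sip_hasDerivAt B hadd hsmul hschwartz hcompat hsmooth z (t • y) 0
    simpa using this
  have hf : HasDerivAt (fun s : ℝ => s * t⁻¹) t⁻¹ 0 := by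
    simpa using (hasDerivAt_id (0:ℝ)).mul_const t⁻¹
  have H3 : HasDerivAt (fun s : ℝ => ‖y + (s * t⁻¹) • z‖^2/2) (B z y * t⁻¹) 0 := by
    have H1' : HasDerivAt (fun s : ℝ => ‖y + s • z‖^2/2) (B z y) ((0:ℝ) * t⁻¹) := by
      simpa using H1
    have := H1'.comp (0:ℝ) hf
    exact this
  have H4 : HasDerivAt (fun s : ℝ => t^2 * (‖y + (s * t⁻¹) • z‖^2/2))
      (t^2 * (B z y * t⁻¹)) 0 := H3.const_mul _
  have hfun : (fun s : ℝ => t^2 * (‖y + (s * t⁻¹) • z‖^2/2))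
      = fun s : ℝ => ‖t • y + s • z‖^2/2 := by
    funext s
    have h1 : t • (y + (s * t⁻¹) • z) = t • y + s • z := by
      rw [smul_add, smul_smul]
      rw [show t * (s * t⁻¹) = s by field_simp]
    rw [← h1, norm_smul, Real.norm_eq_abs, abs_of_pos ht, mul_pow]
    ring
  rw [hfun] at H4
  have := H2.unique H4
  rw [this]
  field_simp

lemma sip_lipschitz
    (hadd : ∀ x y z : M, B (x + y) z = B x z + B y z)
    (hsmul : ∀ (c : ℝ) (x y : M), B (c • x) y = c * B x y)
    (hschwartz : ∀ x y : M, (B x y) ^ 2 ≤ B x x * B y y)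
    (hcompat : ∀ x : M, ‖x‖ ^ 2 = B x x)
    (hsmooth : ∀ x : M, x ≠ 0 → DifferentiableAt ℝ (fun y : M => ‖y‖) x)
    (hlip : ∀ x : M, ‖x‖ = 1 → ∃ κ : ℝ, ∀ y z : M, ‖y‖ = 1 → ‖z‖ = 1 →
      |B x y - B x z| ≤ κ * ‖y - z‖)
    (z : M) : ∃ K : ℝ, ∀ y y' : M, |B z y - B z y'| ≤ K * ‖y - y'‖ := by
  by_cases hz : z = 0
  · refine ⟨0, fun y y' => ?_⟩
    simp [hz, sip_zero_left B hsmul]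
  have hzn : (0:ℝ) < ‖z‖ := norm_pos_iff.mpr hz
  set zh : M := ‖z‖⁻¹ • z with hzh
  have hzh1 : ‖zh‖ = 1 := by
    rw [hzh, norm_smul, Real.norm_eq_abs, abs_of_pos (by positivity)]
    field_simp
  obtain ⟨κ, hκ⟩ := hlip zh hzh1
  set K0 : ℝ := max κ 0 with hK0
  have hK0n : 0 ≤ K0 := le_max_right _ _
  have hzdec : z = ‖z‖ • zh := by
    rw [hzh, smul_smul]
    rw [show ‖z‖ * ‖z‖⁻¹ = 1 by field_simp]
    simp
  -- main bound on unit-normalized version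
  have main : ∀ y y' : M, y ≠ 0 → y' ≠ 0 → |B zh y - B zh y'| ≤ (2*K0 + 1) * ‖y - y'‖ := by
    intro y y' hy hy'
    have hyn : (0:ℝ) < ‖y‖ := norm_pos_iff.mpr hy
    have hy'n : (0:ℝ) < ‖y'‖ := norm_pos_iff.mpr hy'
    set a : ℝ := B zh (‖y‖⁻¹ • y) with ha
    set a' : ℝ := B zh (‖y'‖⁻¹ • y') with ha'
    have hBy : B zh y = ‖y‖ * a := by
      rw [ha, ← sip_homog B hadd hsmul hschwartz hcompat hsmooth zh (‖y‖⁻¹ • y) hyn,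
        smul_smul]
      rw [show ‖y‖ * ‖y‖⁻¹ = 1 by field_simp]
      simp
    have hBy' : B zh y' = ‖y'‖ * a' := by
      rw [ha', ← sip_homog B hadd hsmul hschwartz hcompat hsmooth zh (‖y'‖⁻¹ • y') hy'n,
        smul_smul]
      rw [show ‖y'‖ * ‖y'‖⁻¹ = 1 by field_simp]
      simp
    have hyu : ‖(‖y‖⁻¹ • y)‖ = 1 := by
      rw [norm_smul, Real.norm_eq_abs, abs_of_pos (by positivity)]; field_simp
    have hy'u : ‖(‖y'‖⁻¹ • y')‖ = 1 := by
      rw [norm_smul, Real.norm_eq_abs, abs_of_pos (by positivity)]; field_simp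
    have haa' : |a - a'| ≤ K0 * ‖(‖y‖⁻¹ • y) - (‖y'‖⁻¹ • y')‖ := by
      refine le_trans (hκ _ _ hyu hy'u) ?_
      exact mul_le_mul_of_nonneg_right (le_max_left _ _) (norm_nonneg _)
    have hdist : ‖(‖y‖⁻¹ • y) - (‖y'‖⁻¹ • y')‖ ≤ 2 * ‖y - y'‖ / ‖y‖ := by
      have t1 : ‖(‖y‖⁻¹ • y) - (‖y'‖⁻¹ • y')‖
          ≤ ‖(‖y‖⁻¹ • y) - (‖y‖⁻¹ • y')‖ + ‖(‖y‖⁻¹ • y') - (‖y'‖⁻¹ • y')‖ :=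
        norm_sub_le_norm_sub_add_norm_sub _ _ _
      have t2 : ‖(‖y‖⁻¹ • y) - (‖y‖⁻¹ • y')‖ = ‖y - y'‖ / ‖y‖ := by
        rw [← smul_sub, norm_smul, Real.norm_eq_abs, abs_of_pos (by positivity)]
        ring
      have t3 : ‖(‖y‖⁻¹ • y') - (‖y'‖⁻¹ • y')‖ ≤ ‖y - y'‖ / ‖y‖ := by
        rw [← sub_smul, norm_smul, Real.norm_eq_abs]
        have e : ‖y‖⁻¹ - ‖y'‖⁻¹ = (‖y'‖ - ‖y‖) / (‖y‖ * ‖y'‖) := by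
          rw [eq_div_iff (by positivity)]
          field_simp
        have hnn : |‖y'‖ - ‖y‖| ≤ ‖y - y'‖ := by
          rw [abs_sub_comm]
          exact abs_norm_sub_norm_le _ _
        rw [e, abs_div, abs_of_pos (by positivity : (0:ℝ) < ‖y‖ * ‖y'‖)]
        rw [show |‖y'‖ - ‖y‖| / (‖y‖ * ‖y'‖) * ‖y'‖ = |‖y'‖ - ‖y‖| / ‖y‖ by
          field_simp]
        gcongr
      calc ‖(‖y‖⁻¹ • y) - (‖y'‖⁻¹ • y')‖ ≤ ‖y - y'‖ / ‖y‖ + ‖y - y'‖ / ‖y‖ := by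
            rw [← t2] at *; linarith
        _ = 2 * ‖y - y'‖ / ‖y‖ := by ring
    have ha'le : |a'| ≤ 1 := by
      have := sip_abs_le B hschwartz hcompat zh (‖y'‖⁻¹ • y')
      rwa [hzh1, hy'u, one_mul] at this
    have key : |B zh y - B zh y'| ≤ ‖y‖ * |a - a'| + |‖y‖ - ‖y'‖| * |a'| := by
      rw [hBy, hBy']
      have : ‖y‖ * a - ‖y'‖ * a' = ‖y‖ * (a - a') + (‖y‖ - ‖y'‖) * a' := by ring
      rw [this]
      refine le_trans (abs_add_le _ _) ?_
      rw [abs_mul, abs_mul, abs_of_pos hyn]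
    calc |B zh y - B zh y'| ≤ ‖y‖ * |a - a'| + |‖y‖ - ‖y'‖| * |a'| := key
      _ ≤ ‖y‖ * (K0 * (2 * ‖y - y'‖ / ‖y‖)) + ‖y - y'‖ * 1 := by
          gcongr
          · exact le_trans haa' (by gcongr)
          · exact abs_norm_sub_norm_le _ _
      _ = 2 * K0 * ‖y - y'‖ + ‖y - y'‖ := by field_simp
      _ = (2*K0 + 1) * ‖y - y'‖ := by ring
  -- extend to all y, y'
  have main2 : ∀ y y' : M, |B zh y - B zh y'| ≤ (2*K0 + 1) * ‖y - y'‖ := by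
    have hone : ∀ y : M, |B zh y| ≤ ‖y‖ := by
      intro y
      have := sip_abs_le B hschwartz hcompat zh y
      rwa [hzh1, one_mul] at this
    intro y y'
    by_cases hy : y = 0
    · by_cases hy' : y' = 0
      · simp [hy, hy', sip_zero_right B hschwartz hcompat]
      · rw [hy, sip_zero_right B hschwartz hcompat, zero_sub, abs_neg, zero_sub, norm_neg]
        calc |B zh y'| ≤ ‖y'‖ := hone y'
          _ ≤ (2*K0+1) * ‖y'‖ := by nlinarith [norm_nonneg y']
    · by_cases hy' : y' = 0
      · rw [hy', sip_zero_right B hschwartz hcompat, sub_zero, sub_zero]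
        calc |B zh y| ≤ ‖y‖ := hone y
          _ ≤ (2*K0+1) * ‖y‖ := by nlinarith [norm_nonneg y]
      · exact main y y' hy hy'
  refine ⟨‖z‖ * (2*K0 + 1), fun y y' => ?_⟩
  have h1 : B z y = ‖z‖ * B zh y := by nth_rewrite 1 [hzdec]; rw [hsmul]
  have h2 : B z y' = ‖z‖ * B zh y' := by nth_rewrite 1 [hzdec]; rw [hsmul]
  rw [h1, h2, ← mul_sub, abs_mul, abs_of_pos hzn, mul_assoc]
  exact mul_le_mul_of_nonneg_left (main2 y y') (le_of_lt hzn)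


lemma eig_sq (A : M →ₗ[ℝ] M) (μ : ℝ) (m : M)
    (hm : m ∈ Module.End.eigenspace A μ ⊔ Module.End.eigenspace A (-μ)) :
    A (A m) = (μ^2) • m := by
  rcases Submodule.mem_sup.mp hm with ⟨a, ha, b, hb, rfl⟩
  rw [Module.End.mem_eigenspace_iff] at ha hb
  have h1 : A (a + b) = μ • a + (-μ) • b := by rw [map_add, ha, hb]
  have h2 : A (A (a + b)) = μ • (μ • a) + (-μ) • ((-μ) • b) := by
    rw [h1, map_add, map_smul, map_smul, ha, hb]
  rw [h2, smul_smul, smul_smul, show μ * μ = μ^2 by ring, show -μ * -μ = μ^2 by ring,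
    ← smul_add]

lemma eig_pow (A : M →ₗ[ℝ] M) (μ : ℝ) (m : M)
    (hm : m ∈ Module.End.eigenspace A μ ⊔ Module.End.eigenspace A (-μ)) :
    ∀ n : ℕ, (A^(2*n)) m = ((μ^2)^n) • m := by
  intro n
  induction n with
  | zero => simp
  | succ n ih =>
    have h2 : (A^(2*(n+1))) m = (A^(2*n)) (A (A m)) := by
      rw [show 2*(n+1) = 2*n+2 by ring, pow_add, Module.End.mul_apply, pow_two,
        Module.End.mul_apply]
    rw [h2, eig_sq A μ m hm, map_smul, ih, smul_smul,
      show μ^2 * (μ^2)^n = (μ^2)^(n+1) by ring]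

lemma sip_pow
    (hsmul : ∀ (c : ℝ) (x y : M), B (c • x) y = c * B x y)
    (A : M →ₗ[ℝ] M)
    (habel : ∀ x y : M, B (A x) y = B x (A y))
    (z : M) (μ : ℝ) (hz2 : A (A z) = (μ^2) • z) :
    ∀ (n : ℕ) (y : M), B z ((A^(2*n)) y) = ((μ^2)^n) * B z y := by
  intro n
  induction n with
  | zero => intro y; simp
  | succ n ih =>
    intro y
    have h2 : (A^(2*(n+1))) y = (A^(2*n)) (A (A y)) := by
      rw [show 2*(n+1) = 2*n+2 by ring, pow_add, Module.End.mul_apply, pow_two,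
        Module.End.mul_apply]
    have h3 : B z (A (A y)) = (μ^2) * B z y := by
      rw [← habel z (A y), ← habel (A z) y, hz2, hsmul]
    rw [h2, ih (A (A y)), h3, show (μ^2)^(n+1) = (μ^2)^n * μ^2 by ring]
    ring

end Aux


/-- (Lemma 2 of the paper.) For a diagonalizable adjoint abelian operator
A on a smooth Minkowski space with Lipschitz semi-inner-product, if x = x₁ + … + x_k with
x_i ∈ Ē_i and z ∈ Ē_i, then B(z,x) = B(z,x_i). -/
theorem sip_decomposition
    {M : Type*} [NormedAddCommGroup M] [NormedSpace ℝ M] [FiniteDimensional ℝ M]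
    (B : M → M → ℝ)
    (hadd : ∀ x y z : M, B (x + y) z = B x z + B y z)
    (hsmul : ∀ (c : ℝ) (x y : M), B (c • x) y = c * B x y)
    (hpos : ∀ x : M, 0 ≤ B x x)
    (hdef : ∀ x : M, B x x = 0 → x = 0)
    (hschwartz : ∀ x y : M, (B x y) ^ 2 ≤ B x x * B y y)
    (hcompat : ∀ x : M, ‖x‖ ^ 2 = B x x)
    (hsmooth : ∀ x : M, x ≠ 0 → DifferentiableAt ℝ (fun y : M => ‖y‖) x)
    (hlip : ∀ x : M, ‖x‖ = 1 → ∃ κ : ℝ, ∀ y z : M, ‖y‖ = 1 → ‖z‖ = 1 →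
      |B x y - B x z| ≤ κ * ‖y - z‖)
    (A : M →ₗ[ℝ] M)
    -- A is diagonalizable:
    (hdiag : ∃ (ι : Type) (b : Module.Basis ι ℝ M), ∀ i, ∃ μ : ℝ, A (b i) = μ • b i)
    -- A is adjoint abelian:
    (habel : ∀ x y : M, B (A x) y = B x (A y))
    -- λ₁ > λ₂ > … > λ_k ≥ 0 are the absolute values of the eigenvalues of A:
    (k : ℕ) (lam : Fin k → ℝ) (hanti : StrictAnti lam) (hnonneg : ∀ i, 0 ≤ lam i)
    (heig : Set.range lam = {r : ℝ | ∃ μ : ℝ, Module.End.HasEigenvalue A μ ∧ |μ| = r})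
    (E : Fin k → Submodule ℝ M) (hE : ∀ i, E i = Module.End.eigenspace A (lam i))
    (Eneg : Fin k → Submodule ℝ M) (hEneg : ∀ i, Eneg i = Module.End.eigenspace A (-(lam i)))
    (Ebar : Fin k → Submodule ℝ M) (hEbar : ∀ i, Ebar i = E i ⊔ Eneg i)
    -- the decomposition x = x₁ + … + x_k with x_i ∈ Ē_i:
    (x : M) (c : Fin k → M) (hc : ∀ i, c i ∈ Ebar i) (hx : x = ∑ i, c i)
    (i : Fin k) (z : M) (hz : z ∈ Ebar i) :
    B z x = B z (c i) := by
  classical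
  by_cases hz0 : z = 0
  · rw [hz0, sip_zero_left B hsmul, sip_zero_left B hsmul]
  obtain ⟨K, hK⟩ := sip_lipschitz B hadd hsmul hschwartz hcompat hsmooth hlip z
  have hzn : (0:ℝ) < ‖z‖ := norm_pos_iff.mpr hz0
  have hKnn : 0 ≤ K := by
    have h1 := hK z 0
    rw [sip_zero_right B hschwartz hcompat, sub_zero, sub_zero, ← hcompat,
      abs_of_nonneg (by positivity)] at h1
    nlinarith
  have hmemEbar : ∀ j (m : M), m ∈ Ebar j →
      m ∈ Module.End.eigenspace A (lam j) ⊔ Module.End.eigenspace A (-(lam j)) := by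
    intro j m hm
    rwa [hEbar, hE, hEneg] at hm
  have hApow : ∀ j (m : M), m ∈ Ebar j → ∀ n, (A^(2*n)) m = (((lam j)^2)^n) • m :=
    fun j m hm => eig_pow A (lam j) m (hmemEbar j m hm)
  have hident : ∀ (n : ℕ) (y : M), B z ((A^(2*n)) y) = (((lam i)^2)^n) * B z y :=
    sip_pow B hsmul A habel z (lam i) (eig_sq A (lam i) z (hmemEbar i z hz))
  rcases (hnonneg i).lt_or_eq with hlami | hlami
  -- CASE lam i > 0
  · have hlamj : ∀ j, j < i → 0 < lam j := fun j hj => lt_trans hlami (hanti hj)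
    have hpow_pos : ∀ n : ℕ, (0:ℝ) < ((lam i)^2)^n := fun n => by positivity
    -- main sub-lemma: for coefficient vectors supported on {j ≤ i} with t i = 1
    have SL : ∀ t : Fin k → ℝ, t i = 1 → (∀ j, i < j → t j = 0) →
        B z (∑ j, t j • c j) = B z (c i) := by
      intro t hti htj
      set ν : Fin k → ℝ := fun j => if j < i then (lam i / lam j)^2 else 1 with hν
      have hν0 : ∀ j, j < i → 0 ≤ ν j := by
        intro j hj
        simp only [hν, if_pos hj]
        positivity
      have hν1 : ∀ j, j < i → ν j < 1 := by
        intro j hj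
        simp only [hν, if_pos hj]
        have h1 : lam i < lam j := hanti hj
        have h2 : lam i / lam j < 1 := (div_lt_one (hlamj j hj)).mpr h1
        have h3 : 0 ≤ lam i / lam j := div_nonneg (le_of_lt hlami) (le_of_lt (hlamj j hj))
        nlinarith
      have key : ∀ m : ℕ, (A^(2*m)) (∑ j, (t j * ν j ^ m) • c j)
          = (((lam i)^2)^m) • (∑ j, t j • c j) := by
        intro m
        rw [map_sum, Finset.smul_sum]
        apply Finset.sum_congr rfl
        intro j _
        rw [map_smul, hApow j (c j) (hc j) m, smul_smul, smul_smul]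
        congr 1
        rcases lt_trichotomy j i with hj | hj | hj
        · have hlj := (hlamj j hj).ne'
          simp only [hν, if_pos hj]
          rw [mul_assoc, ← mul_pow, show (lam i / lam j)^2 * (lam j)^2 = (lam i)^2 by
            field_simp]
          ring
        · subst hj
          simp only [hν, if_neg (lt_irrefl _)]
          ring
        · rw [htj j hj]
          ring
      have hBeq : ∀ m : ℕ, B z (∑ j, t j • c j) = B z (∑ j, (t j * ν j ^ m) • c j) := by
        intro m
        have h1 := hident m (∑ j, (t j * ν j ^ m) • c j)
        rw [key m, sip_homog B hadd hsmul hschwartz hcompat hsmooth z _ (hpow_pos m)] at h1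
        exact mul_left_cancel₀ (ne_of_gt (hpow_pos m)) h1
      have hdiffm : ∀ m : ℕ, |B z (∑ j, t j • c j) - B z (c i)|
          ≤ K * ∑ j, (if j < i then |t j| * ν j ^ m * ‖c j‖ else 0) := by
        intro m
        rw [hBeq m]
        refine le_trans (hK _ _) ?_
        have hci : (∑ j, (if j = i then (1:ℝ) else 0) • c j) = c i := by
          simp [ite_smul]
        rw [← hci, ← Finset.sum_sub_distrib]
        have hterm : ∀ j ∈ Finset.univ, ((t j * ν j ^ m) • c j - (if j = i then (1:ℝ) else 0) • c j)
            = (if j < i then t j * ν j ^ m else 0) • c j := by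
          intro j _
          rcases lt_trichotomy j i with hj | hj | hj
          · rw [if_neg (ne_of_lt hj), if_pos hj, zero_smul, sub_zero]
          · subst hj
            simp [hti, hν]
          · rw [if_neg (ne_of_gt hj), if_neg (not_lt.mpr (le_of_lt hj)), htj j hj,
              zero_smul, zero_mul, zero_smul, sub_zero]
        rw [Finset.sum_congr rfl hterm]
        have hnb : ‖∑ j, (if j < i then t j * ν j ^ m else 0) • c j‖
            ≤ ∑ j, (if j < i then |t j| * ν j ^ m * ‖c j‖ else 0) := by
          refine le_trans (norm_sum_le _ _) ?_
          apply le_of_eq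
          apply Finset.sum_congr rfl
          intro j _
          by_cases hj : j < i
          · rw [if_pos hj, if_pos hj, norm_smul, Real.norm_eq_abs, abs_mul,
              abs_pow, abs_of_nonneg (hν0 j hj)]
          · rw [if_neg hj, if_neg hj, zero_smul, norm_zero]
        exact mul_le_mul_of_nonneg_left hnb hKnn
      have hT : Filter.Tendsto
          (fun m : ℕ => K * ∑ j, (if j < i then |t j| * ν j ^ m * ‖c j‖ else 0))
          Filter.atTop (nhds 0) := by
        have h0 : (0:ℝ) = K * ∑ j : Fin k, (0:ℝ) := by simp
        rw [show nhds (0:ℝ) = nhds (K * ∑ j : Fin k, (0:ℝ)) by rw [← h0]]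
        apply Filter.Tendsto.const_mul
        apply tendsto_finset_sum
        intro j _
        by_cases hj : j < i
        · simp only [if_pos hj]
          have := tendsto_pow_atTop_nhds_zero_of_lt_one (hν0 j hj) (hν1 j hj)
          have h2 := (this.const_mul (|t j|)).mul_const (‖c j‖)
          simpa using h2
        · simp only [if_neg hj]
          exact tendsto_const_nhds
      have habs : |B z (∑ j, t j • c j) - B z (c i)| ≤ 0 := ge_of_tendsto' hT hdiffm
      have := abs_nonpos_iff.mp habs
      linarith [sub_eq_zero.mp this, this]
    -- Step 1: B z x = B z (∑ j, ρ j ^ n • c j)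
    set ρ : Fin k → ℝ := fun j => (lam j / lam i)^2 with hρ
    have hρi : ρ i = 1 := by
      simp only [hρ, div_self (ne_of_gt hlami), one_pow]
    have hρ0 : ∀ j, 0 ≤ ρ j := fun j => by simp only [hρ]; positivity
    have hρ1 : ∀ j, i < j → ρ j < 1 := by
      intro j hj
      simp only [hρ]
      have h1 : lam j < lam i := hanti hj
      have h2 : lam j / lam i < 1 := (div_lt_one hlami).mpr h1
      have h3 : 0 ≤ lam j / lam i := div_nonneg (hnonneg j) (le_of_lt hlami)
      nlinarith
    have hstep : ∀ n : ℕ, B z x = B z (∑ j, ρ j ^ n • c j) := by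
      intro n
      have key : (A^(2*n)) x = (((lam i)^2)^n) • (∑ j, ρ j ^ n • c j) := by
        rw [hx, map_sum, Finset.smul_sum]
        apply Finset.sum_congr rfl
        intro j _
        rw [hApow j (c j) (hc j) n, smul_smul]
        congr 1
        rw [← mul_pow, show (lam i)^2 * ρ j = (lam j)^2 by
          simp only [hρ]; field_simp]
      have h1 := hident n x
      rw [key, sip_homog B hadd hsmul hschwartz hcompat hsmooth z _ (hpow_pos n)] at h1
      exact (mul_left_cancel₀ (ne_of_gt (hpow_pos n)) h1).symm
    -- combine with SL
    have hSLn : ∀ n : ℕ, B z (∑ j, (if j ≤ i then ρ j ^ n else 0) • c j) = B z (c i) := by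
      intro n
      apply SL
      · rw [if_pos (le_refl i), hρi, one_pow]
      · intro j hj
        rw [if_neg (not_le.mpr hj)]
    have hdiffn : ∀ n : ℕ, |B z x - B z (c i)|
        ≤ K * ∑ j, (if i < j then ρ j ^ n * ‖c j‖ else 0) := by
      intro n
      rw [hstep n, ← hSLn n]
      refine le_trans (hK _ _) ?_
      rw [← Finset.sum_sub_distrib]
      have hterm : ∀ j ∈ Finset.univ, (ρ j ^ n • c j - (if j ≤ i then ρ j ^ n else 0) • c j)
          = (if i < j then ρ j ^ n else 0) • c j := by
        intro j _
        by_cases hj : j ≤ i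
        · rw [if_pos hj, if_neg (not_lt.mpr hj), sub_self, zero_smul]
        · rw [if_neg hj, if_pos (not_le.mp hj), zero_smul, sub_zero]
      rw [Finset.sum_congr rfl hterm]
      have hnb : ‖∑ j, (if i < j then ρ j ^ n else 0) • c j‖
          ≤ ∑ j, (if i < j then ρ j ^ n * ‖c j‖ else 0) := by
        refine le_trans (norm_sum_le _ _) ?_
        apply le_of_eq
        apply Finset.sum_congr rfl
        intro j _
        by_cases hj : i < j
        · rw [if_pos hj, if_pos hj, norm_smul, Real.norm_eq_abs, abs_pow,
            abs_of_nonneg (hρ0 j)]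
        · rw [if_neg hj, if_neg hj, zero_smul, norm_zero]
      exact mul_le_mul_of_nonneg_left hnb hKnn
    have hT : Filter.Tendsto
        (fun n : ℕ => K * ∑ j, (if i < j then ρ j ^ n * ‖c j‖ else 0))
        Filter.atTop (nhds 0) := by
      have h0 : (0:ℝ) = K * ∑ j : Fin k, (0:ℝ) := by simp
      rw [show nhds (0:ℝ) = nhds (K * ∑ j : Fin k, (0:ℝ)) by rw [← h0]]
      apply Filter.Tendsto.const_mul
      apply tendsto_finset_sum
      intro j _
      by_cases hj : i < j
      · simp only [if_pos hj]
        have := tendsto_pow_atTop_nhds_zero_of_lt_one (hρ0 j) (hρ1 j hj)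
        simpa using this.mul_const (‖c j‖)
      · simp only [if_neg hj]
        exact tendsto_const_nhds
    have habs : |B z x - B z (c i)| ≤ 0 := ge_of_tendsto' hT hdiffn
    have := abs_nonpos_iff.mp habs
    linarith [sub_eq_zero.mp this]
  -- CASE lam i = 0
  · have hlam0 : lam i = 0 := hlami.symm
    have hlast : ∀ j : Fin k, j ≠ i → 0 < lam j := by
      intro j hj
      rcases lt_or_gt_of_ne hj with h | h
      · rw [← hlam0]
        exact hanti h
      · exfalso
        have h1 : lam j < lam i := hanti h
        have h2 := hnonneg j
        rw [hlam0] at h1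
        linarith
    have hker : ∀ m : M, m ∈ Ebar i → A m = 0 := by
      intro m hm
      rcases Submodule.mem_sup.mp (hmemEbar i m hm) with ⟨a, ha, b, hb, rfl⟩
      rw [Module.End.mem_eigenspace_iff] at ha hb
      rw [map_add, ha, hb, hlam0]
      simp
    have hAz : A z = 0 := hker z hz
    have hAci : A (c i) = 0 := hker (c i) (hc i)
    -- the complementary part lies in the range of A
    have hrange : ∀ j : Fin k, j ≠ i → c j ∈ LinearMap.range A := by
      intro j hj
      rcases Submodule.mem_sup.mp (hmemEbar j (c j) (hc j)) with ⟨a, ha, b, hb, hab⟩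
      rw [Module.End.mem_eigenspace_iff] at ha hb
      have hl := (hlast j hj).ne'
      rw [← hab]
      refine Submodule.add_mem _ ⟨(lam j)⁻¹ • a, ?_⟩ ⟨-((lam j)⁻¹) • b, ?_⟩
      · rw [map_smul, ha, smul_smul]
        rw [show (lam j)⁻¹ * lam j = 1 by field_simp]
        simp
      · rw [map_smul, hb, smul_smul]
        rw [show -(lam j)⁻¹ * -lam j = 1 by field_simp]
        simp
    have hPmem : (∑ j ∈ Finset.univ.erase i, c j) ∈ LinearMap.range A :=
      Submodule.sum_mem _ (fun j hj => hrange j (Finset.ne_of_mem_erase hj))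
    obtain ⟨u, hu⟩ := hPmem
    have hxP : x = A u + c i := by
      rw [hx, hu, ← Finset.sum_erase_add Finset.univ c (Finset.mem_univ i)]
    -- Pythagoras for range A ⊕ ker A
    have Py : ∀ w' : M, A w' = 0 → ‖A u + w'‖^2/2 = ‖A u‖^2/2 + ‖w'‖^2/2 := by
      intro w' hw'
      set F : ℝ → ℝ := fun s => ‖w' + s • (A u)‖^2/2 - ‖(0:M) + s • (A u)‖^2/2 with hF
      have hder : ∀ s : ℝ, HasDerivAt F 0 s := by
        intro s
        have H1 := sip_hasDerivAt B hadd hsmul hschwartz hcompat hsmooth (A u) w' s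
        have H2 := sip_hasDerivAt B hadd hsmul hschwartz hcompat hsmooth (A u) 0 s
        have heq : B (A u) (w' + s • A u) = B (A u) ((0:M) + s • A u) := by
          rw [habel, habel]
          congr 1
          simp [map_add, map_smul, hw']
        have h3 := H1.sub H2
        rw [heq, sub_self] at h3
        exact h3
      have hc1 : F 1 = F 0 :=
        is_const_of_deriv_eq_zero (fun s => (hder s).differentiableAt)
          (fun s => (hder s).deriv) 1 0
      have e1 : F 1 = ‖w' + A u‖^2/2 - ‖A u‖^2/2 := by
        simp only [hF, one_smul, zero_add]
      have e0 : F 0 = ‖w'‖^2/2 := by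
        simp only [hF, zero_smul, add_zero, zero_add, norm_zero]
        ring
      rw [e1, e0] at hc1
      rw [show A u + w' = w' + A u by abel]
      linarith
    -- final derivative comparison
    have H1 := sip_hasDerivAt B hadd hsmul hschwartz hcompat hsmooth z (A u + c i) 0
    have H2 := sip_hasDerivAt B hadd hsmul hschwartz hcompat hsmooth z (c i) 0
    have H2' : HasDerivAt (fun t : ℝ => ‖A u‖^2/2 + ‖c i + t • z‖^2/2)
        (B z (c i + (0:ℝ) • z)) 0 := H2.const_add _
    have hfeq : (fun t : ℝ => ‖(A u + c i) + t • z‖^2/2)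
        = (fun t : ℝ => ‖A u‖^2/2 + ‖c i + t • z‖^2/2) := by
      funext t
      rw [show (A u + c i) + t • z = A u + (c i + t • z) by abel,
        Py (c i + t • z) (by simp [map_add, map_smul, hAci, hAz])]
    rw [hfeq] at H1
    have hfin := H1.unique H2'
    simp only [zero_smul, add_zero] at hfin
    rw [hxP, hfin]
end

section
/- Let M be a two-dimensional smooth Minkowski space whose compatible semi-inner-product B satisfies the Lipschitz property, and let e₁, e₂ ∈ M with ‖e₁‖ = ‖e₂‖ = 1 and B(e₁, α₁e₁ + α₂e₂) = α₁ for all α₁, α₂ ∈ ℝ. Then the norm of M is Euclidean with respect to the basis {e₁, e₂}: ‖α₁e₁ + α₂e₂‖² = α₁² + α₂² for all α₁, α₂ ∈ ℝ. Consequently also B(e₂, α₁e₁ + α₂e₂) = α₂ for all α₁, α₂ ∈ ℝ. -/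
lemma sip_eq_deriv {M : Type*} [NormedAddCommGroup M] [NormedSpace ℝ M]
    (B : M → M → ℝ)
    (hadd : ∀ x y z : M, B (x + y) z = B x z + B y z)
    (hsmul : ∀ (c : ℝ) (x y : M), B (c • x) y = c * B x y)
    (hschwartz : ∀ x y : M, (B x y) ^ 2 ≤ B x x * B y y)
    (hcompat : ∀ x : M, ‖x‖ ^ 2 = B x x)
    {y : M} (hy : y ≠ 0) (φ : M →L[ℝ] ℝ)
    (hφ : HasFDerivAt (fun z : M => ‖z‖) φ y) (x : M) :
    B x y = ‖y‖ * φ x := by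
  have hypos : 0 < ‖y‖ := norm_pos_iff.mpr hy
  have hbd : ∀ z : M, B z y ≤ ‖z‖ * ‖y‖ := by
    intro z
    nlinarith [hschwartz z y, (hcompat z).symm, (hcompat y).symm, norm_nonneg z, norm_nonneg y,
      mul_nonneg (norm_nonneg z) (norm_nonneg y), sq_nonneg (B z y)]
  set g : ℝ → ℝ := fun t => ‖y + t • x‖ with hgdef
  have h1 : HasDerivAt (fun t : ℝ => y + t • x) x 0 := by
    simpa using ((hasDerivAt_id (0:ℝ)).smul_const x).const_add y
  have hφ' : HasFDerivAt (fun z : M => ‖z‖) φ ((fun t : ℝ => y + t • x) 0) := by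
    simpa using hφ
  have hg : HasDerivAt g (φ x) 0 := hφ'.comp_hasDerivAt 0 h1
  have hslope := hasDerivAt_iff_tendsto_slope.mp hg
  have hineq : ∀ t : ℝ, t * B x y ≤ (g t - g 0) * ‖y‖ := by
    intro t
    have h1 : B (y + t • x) y = B y y + t * B x y := by rw [hadd, hsmul]
    have h2 := hbd (y + t • x)
    have h3 : g 0 = ‖y‖ := by simp [hgdef]
    have h4 : ‖y‖ ^ 2 = B y y := hcompat y
    have h5 : g t = ‖y + t • x‖ := rfl
    nlinarith [h2]
  have hsR : Filter.Tendsto (slope g 0) (nhdsWithin (0:ℝ) (Set.Ioi 0)) (nhds (φ x)) :=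
    hslope.mono_left (nhdsWithin_mono _ (fun t ht => ne_of_gt ht))
  have hR : B x y / ‖y‖ ≤ φ x := by
    apply ge_of_tendsto hsR
    filter_upwards [self_mem_nhdsWithin] with t ht
    have ht : (0:ℝ) < t := ht
    rw [slope_def_field]
    rw [div_le_div_iff₀ hypos (by linarith : (0:ℝ) < t - 0)]
    have := hineq t
    nlinarith
  have hsL : Filter.Tendsto (slope g 0) (nhdsWithin (0:ℝ) (Set.Iio 0)) (nhds (φ x)) :=
    hslope.mono_left (nhdsWithin_mono _ (fun t ht => ne_of_lt ht))
  have hL : φ x ≤ B x y / ‖y‖ := by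
    apply le_of_tendsto hsL
    filter_upwards [self_mem_nhdsWithin] with t ht
    have ht : t < (0:ℝ) := ht
    rw [slope_def_field]
    have e1 : (g t - g 0) / (t - 0) * t = g t - g 0 := by
      rw [sub_zero]; exact div_mul_cancel₀ _ (ne_of_lt ht)
    have e2 : B x y / ‖y‖ * ‖y‖ = B x y := div_mul_cancel₀ _ (ne_of_gt hypos)
    nlinarith [hineq t, mul_pos (neg_pos.mpr ht) hypos]
  have heq : B x y / ‖y‖ = φ x := le_antisymm hR hL
  rw [div_eq_iff (ne_of_gt hypos)] at heq
  rw [heq]; ring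

lemma norm_sq_hasDerivAt {M : Type*} [NormedAddCommGroup M] [NormedSpace ℝ M]
    (B : M → M → ℝ)
    (hadd : ∀ x y z : M, B (x + y) z = B x z + B y z)
    (hsmul : ∀ (c : ℝ) (x y : M), B (c • x) y = c * B x y)
    (hschwartz : ∀ x y : M, (B x y) ^ 2 ≤ B x x * B y y)
    (hcompat : ∀ x : M, ‖x‖ ^ 2 = B x x)
    (hsmooth : ∀ x : M, x ≠ 0 → DifferentiableAt ℝ (fun y : M => ‖y‖) x)
    (a v : M) (t₀ : ℝ) (hy : a + t₀ • v ≠ 0) :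
    HasDerivAt (fun t : ℝ => ‖a + t • v‖ ^ 2) (2 * B v (a + t₀ • v)) t₀ := by
  set y := a + t₀ • v with hydef
  have hφ : HasFDerivAt (fun z : M => ‖z‖) (fderiv ℝ (fun z : M => ‖z‖) y) y :=
    (hsmooth y hy).hasFDerivAt
  have h1 : HasDerivAt (fun t : ℝ => a + t • v) v t₀ := by
    simpa using ((hasDerivAt_id t₀).smul_const v).const_add a
  have hφ' : HasFDerivAt (fun z : M => ‖z‖) (fderiv ℝ (fun z : M => ‖z‖) y)
      ((fun t : ℝ => a + t • v) t₀) := hφ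
  have hn : HasDerivAt (fun t : ℝ => ‖a + t • v‖) (fderiv ℝ (fun z : M => ‖z‖) y v) t₀ :=
    hφ'.comp_hasDerivAt t₀ h1
  have hBv : B v y = ‖y‖ * fderiv ℝ (fun z : M => ‖z‖) y v :=
    sip_eq_deriv B hadd hsmul hschwartz hcompat hy _ hφ v
  have := hn.fun_pow 2
  refine this.congr_deriv ?_
  simp [hBv]
  ring



/-- In a two-dimensional smooth Minkowski space with Lipschitz
semi-inner-product, if e₁, e₂ are unit vectors with B(e₁, α₁e₁ + α₂e₂) = α₁ for all α,
then the norm is Euclidean with respect to {e₁, e₂}, and B(e₂, α₁e₁ + α₂e₂) = α₂. -/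
theorem two_dim_euclidean
    {M : Type*} [NormedAddCommGroup M] [NormedSpace ℝ M] [FiniteDimensional ℝ M]
    (hdim : Module.finrank ℝ M = 2)
    (B : M → M → ℝ)
    (hadd : ∀ x y z : M, B (x + y) z = B x z + B y z)
    (hsmul : ∀ (c : ℝ) (x y : M), B (c • x) y = c * B x y)
    (hpos : ∀ x : M, 0 ≤ B x x)
    (hdef : ∀ x : M, B x x = 0 → x = 0)
    (hschwartz : ∀ x y : M, (B x y) ^ 2 ≤ B x x * B y y)
    (hcompat : ∀ x : M, ‖x‖ ^ 2 = B x x)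
    (hsmooth : ∀ x : M, x ≠ 0 → DifferentiableAt ℝ (fun y : M => ‖y‖) x)
    (hlip : ∀ x : M, ‖x‖ = 1 → ∃ κ : ℝ, ∀ y z : M, ‖y‖ = 1 → ‖z‖ = 1 →
      |B x y - B x z| ≤ κ * ‖y - z‖)
    (e₁ e₂ : M) (he₁ : ‖e₁‖ = 1) (he₂ : ‖e₂‖ = 1)
    (hB1 : ∀ α₁ α₂ : ℝ, B e₁ (α₁ • e₁ + α₂ • e₂) = α₁) :
    (∀ α₁ α₂ : ℝ, ‖α₁ • e₁ + α₂ • e₂‖ ^ 2 = α₁ ^ 2 + α₂ ^ 2) ∧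
    (∀ α₁ α₂ : ℝ, B e₂ (α₁ • e₁ + α₂ • e₂) = α₂) := by
  have hzero : ∀ x : M, B x 0 = 0 := by
    intro x
    have h0 : B (0:M) 0 = 0 := by rw [← hcompat]; simp
    have h2 : (B x 0) ^ 2 ≤ 0 := by
      have h3 := hschwartz x 0
      rw [h0, mul_zero] at h3
      exact h3
    exact sq_eq_zero_iff.mp (le_antisymm h2 (sq_nonneg _))
  have part1 : ∀ α₁ α₂ : ℝ, ‖α₁ • e₁ + α₂ • e₂‖ ^ 2 = α₁ ^ 2 + α₂ ^ 2 := by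
    intro α₁ α₂
    by_cases h2 : α₂ = 0
    · subst h2
      simp [norm_smul, he₁, mul_pow, sq_abs]
    · have hne : ∀ t : ℝ, α₂ • e₂ + t • e₁ ≠ 0 := by
        intro t h
        rw [add_comm] at h
        have ht := hB1 t α₂
        rw [h, hzero] at ht
        rw [← ht] at h
        simp only [zero_smul, zero_add] at h
        rcases smul_eq_zero.mp h with h' | h'
        · exact h2 h'
        · rw [h'] at he₂; simp at he₂
      have hG : ∀ t : ℝ, HasDerivAt (fun s : ℝ => ‖α₂ • e₂ + s • e₁‖ ^ 2 - s ^ 2) 0 t := by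
        intro t
        have hd := norm_sq_hasDerivAt B hadd hsmul hschwartz hcompat hsmooth
          (α₂ • e₂) e₁ t (hne t)
        have hBval : B e₁ (α₂ • e₂ + t • e₁) = t := by
          rw [add_comm]; exact hB1 t α₂
        rw [hBval] at hd
        have hp := hasDerivAt_pow 2 t
        have := hd.fun_sub hp
        simpa using this
      have hconst := is_const_of_deriv_eq_zero
        (fun t => ((hG t).differentiableAt : DifferentiableAt ℝ _ t))
        (fun t => (hG t).deriv) α₁ 0
      simp only [zero_smul, add_zero, norm_smul, he₂, Real.norm_eq_abs] at hconst
      rw [add_comm]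
      nlinarith [hconst, sq_abs α₂]
  refine ⟨part1, ?_⟩
  intro α₁ α₂
  by_cases hy : α₁ • e₁ + α₂ • e₂ = 0
  · have h0 := part1 α₁ α₂
    rw [hy] at h0
    simp only [norm_zero] at h0
    have hα₂ : α₂ = 0 := by nlinarith [sq_nonneg α₁, sq_nonneg α₂]
    rw [hy, hzero, hα₂]
  · have hd := norm_sq_hasDerivAt B hadd hsmul hschwartz hcompat hsmooth
      (α₁ • e₁) e₂ α₂ hy
    have hd2 : HasDerivAt (fun t : ℝ => ‖α₁ • e₁ + t • e₂‖ ^ 2) (2 * α₂) α₂ := by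
      have hfun : (fun t : ℝ => ‖α₁ • e₁ + t • e₂‖ ^ 2) = fun t => α₁ ^ 2 + t ^ 2 :=
        funext fun t => part1 α₁ t
      rw [hfun]
      simpa using (hasDerivAt_pow 2 α₂).const_add (α₁ ^ 2)
    have := hd.unique hd2
    linarith
end

section
/- Let M be a smooth Minkowski space with compatible semi-inner-product B, and let A : M → M be a diagonalizable linear operator that is adjoint abelian with respect to B, all of whose eigenvalues have the same nonzero absolute value λ > 0. Then A = λT for some isometry T of M; that is, ‖Ax‖ = λ‖x‖ for every x ∈ M. -/
/-- A diagonalizable adjoint abelian operator on a smooth Minkowski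
space all of whose eigenvalues have the same nonzero absolute value λ is λ times an
isometry. -/
theorem adjoint_abelian_single_modulus
    {M : Type*} [NormedAddCommGroup M] [NormedSpace ℝ M] [FiniteDimensional ℝ M]
    (B : M → M → ℝ)
    (hadd : ∀ x y z : M, B (x + y) z = B x z + B y z)
    (hsmul : ∀ (c : ℝ) (x y : M), B (c • x) y = c * B x y)
    (hpos : ∀ x : M, 0 ≤ B x x)
    (hdef : ∀ x : M, B x x = 0 → x = 0)
    (hschwartz : ∀ x y : M, (B x y) ^ 2 ≤ B x x * B y y)
    (hcompat : ∀ x : M, ‖x‖ ^ 2 = B x x)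
    (hsmooth : ∀ x : M, x ≠ 0 → DifferentiableAt ℝ (fun y : M => ‖y‖) x)
    (A : M →ₗ[ℝ] M)
    -- A is diagonalizable:
    (hdiag : ∃ (ι : Type) (b : Module.Basis ι ℝ M), ∀ i, ∃ μ : ℝ, A (b i) = μ • b i)
    -- A is adjoint abelian:
    (habel : ∀ x y : M, B (A x) y = B x (A y))
    -- all eigenvalues have the same nonzero absolute value λ:
    (lam : ℝ) (hlam : 0 < lam)
    (heig : ∀ μ : ℝ, Module.End.HasEigenvalue A μ → |μ| = lam) :
    ∃ T : M →ₗ[ℝ] M, (∀ x : M, ‖T x‖ = ‖x‖) ∧ ∀ x : M, A x = lam • T x := by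
  obtain ⟨ι, b, hb⟩ := hdiag
  -- B x (c • x) = c * B x x for c ≠ 0
  have key : ∀ (c : ℝ), c ≠ 0 → ∀ x : M, B x (c • x) = c * B x x := by
    intro c hc x
    have h1 : B (c • x) (c • x) = c * B x (c • x) := hsmul c x (c • x)
    have h2 : B (c • x) (c • x) = c ^ 2 * B x x := by
      rw [← hcompat, norm_smul, mul_pow, ← hcompat, Real.norm_eq_abs, sq_abs]
    have h3 : c * B x (c • x) = c * (c * B x x) := by
      rw [h1.symm.trans h2]; ring
    have := mul_left_cancel₀ hc h3
    linarith
  -- A ∘ A = λ² • id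
  have hA2 : ∀ x : M, A (A x) = (lam ^ 2) • x := by
    have : (A ∘ₗ A) = (lam ^ 2) • (LinearMap.id : M →ₗ[ℝ] M) := by
      apply b.ext
      intro i
      obtain ⟨μ, hμ⟩ := hb i
      have hev : Module.End.HasEigenvalue A μ :=
        Module.End.hasEigenvalue_of_hasEigenvector
          ⟨Module.End.mem_eigenspace_iff.mpr hμ, b.ne_zero i⟩
      have habs : |μ| = lam := heig μ hev
      have hμ2 : μ ^ 2 = lam ^ 2 := by rw [← sq_abs, habs]
      simp [LinearMap.comp_apply, hμ, map_smul, smul_smul, ← hμ2, sq]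
    intro x
    have := congrFun (congrArg (fun f : M →ₗ[ℝ] M => (f : M → M)) this) x
    simpa using this
  have hnorm : ∀ x : M, ‖A x‖ = lam * ‖x‖ := by
    intro x
    have h1 : ‖A x‖ ^ 2 = B x (A (A x)) := by rw [hcompat, habel]
    have h2 : B x (A (A x)) = lam ^ 2 * B x x := by
      rw [hA2 x, key (lam ^ 2) (by positivity) x]
    have h3 : ‖A x‖ ^ 2 = (lam * ‖x‖) ^ 2 := by
      rw [h1, h2, mul_pow, hcompat]
    nlinarith [h3, norm_nonneg (A x), norm_nonneg x, hlam.le,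
      mul_nonneg hlam.le (norm_nonneg x)]
  refine ⟨lam⁻¹ • A, ?_, ?_⟩
  · intro x
    simp only [LinearMap.smul_apply, norm_smul, Real.norm_eq_abs,
      abs_inv, abs_of_pos hlam, hnorm x]
    field_simp
  · intro x
    simp [smul_smul, mul_inv_cancel₀ hlam.ne']
end
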